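/- arXiv:1012.5907 — 3 statements merged into one kernel-verified Lean document; each statement's English description precedes it below -/
import Mathlib

section
/- Let G be a finite simple graph containing an induced K_{2,3}: distinct vertices x_1, x_2, y_1, y_2, y_3 of G such that among these five vertices exactly the pairs x_i y_j (i ∈ {1,2}, j ∈ {1,2,3}) are edges. In every 1-obstacle representation v of G: the convex hull of {v(x_1), v(x_2)} is disjoint from the convex hull of {v(y_1), v(y_2), v(y_3)} (the two parts are linearly separable); moreover, x_1 and x_2 induce the same sight ordering of {v(y_1), v(y_2), v(y_3)} (for all j, j', the point v(x_1) sees v(y_j) to the left of v(y_{j'}) if and only if v(x_2) does), and y_1, y_2, y_3 induce the same sight ordering of {v(x_1), v(x_2)}. -/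
open Set

namespace K23

def X (u v w : ℝ × ℝ) : ℝ := (v.1 - u.1) * (w.2 - u.2) - (v.2 - u.2) * (w.1 - u.1)

lemma X_cyc (u v w : ℝ×ℝ) : X u v w = X v w u := by unfold X; ring
lemma X_swap12 (u v w : ℝ×ℝ) : X u v w = -X v u w := by unfold X; ring
lemma X_uvu (u v : ℝ×ℝ) : X u v u = 0 := by unfold X; ring
lemma X_uvv (u v : ℝ×ℝ) : X u v v = 0 := by unfold X; ring
lemma X_uuw (u w : ℝ×ℝ) : X u u w = 0 := by unfold X; ring

lemma X_sum (p r s x : ℝ×ℝ) : X r s x + X s p x + X p r x = X p r s := by unfold X; ring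
lemma X_recon1 (p r s x : ℝ×ℝ) :
    X r s x * p.1 + X s p x * r.1 + X p r x * s.1 = X p r s * x.1 := by unfold X; ring
lemma X_recon2 (p r s x : ℝ×ℝ) :
    X r s x * p.2 + X s p x * r.2 + X p r x * s.2 = X p r s * x.2 := by unfold X; ring

lemma X_aff (u v w₁ w₂ : ℝ×ℝ) (a b : ℝ) (c : ℝ×ℝ) (hab : a + b = 1)
    (h1 : c.1 = a*w₁.1 + b*w₂.1) (h2 : c.2 = a*w₁.2 + b*w₂.2) :
    X u v c = a * X u v w₁ + b * X u v w₂ := by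
  have hb : b = 1 - a := by linarith
  subst hb; unfold X; rw [h1, h2]; ring

lemma X_aff_scaled (u v a b z : ℝ×ℝ) (α β D : ℝ) (hsum : α + β = D)
    (h1 : D*z.1 = α*a.1 + β*b.1) (h2 : D*z.2 = α*a.2 + β*b.2) :
    D * X u v z = α * X u v a + β * X u v b := by
  unfold X
  linear_combination (v.1-u.1)*h2 - (v.2-u.2)*h1 + ((v.1-u.1)*u.2 - (v.2-u.2)*u.1)*hsum

lemma contX (u v : ℝ×ℝ) : Continuous (fun z : ℝ×ℝ => X u v z) := by unfold X; fun_prop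

lemma prodext (a b : ℝ×ℝ) (h1 : a.1 = b.1) (h2 : a.2 = b.2) : a = b := Prod.ext h1 h2

lemma openSeg_comps {a b c : ℝ×ℝ} (h : c ∈ openSegment ℝ a b) :
    ∃ t u : ℝ, 0 < t ∧ 0 < u ∧ t + u = 1 ∧ c.1 = t*a.1+u*b.1 ∧ c.2 = t*a.2+u*b.2 := by
  obtain ⟨t,u,ht,hu,htu,h⟩ := h
  exact ⟨t,u,ht,hu,htu, by rw [←h]; simp, by rw [←h]; simp⟩

lemma mem_seg_div (a b z : ℝ×ℝ) (α β D : ℝ) (hD : 0 < D) (hα : 0 ≤ α) (hβ : 0 ≤ β)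
    (hsum : α + β = D) (h1 : D*z.1 = α*a.1 + β*b.1) (h2 : D*z.2 = α*a.2 + β*b.2) :
    z ∈ segment ℝ a b := by
  refine ⟨α/D, β/D, by positivity, by positivity, by field_simp; linarith, prodext _ _ ?_ ?_⟩ <;>
    · simp only [Prod.fst_add, Prod.snd_add, Prod.smul_fst, Prod.smul_snd, smul_eq_mul]
      field_simp
      linarith

lemma eq_of_scaled (z w : ℝ×ℝ) (D : ℝ) (hD : D ≠ 0) (h1 : D*z.1 = D*w.1) (h2 : D*z.2 = D*w.2) :
    z = w := prodext _ _ (mul_left_cancel₀ hD h1) (mul_left_cancel₀ hD h2)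

lemma collinear_of_X (u v w : ℝ×ℝ) (h : X u v w = 0) : Collinear ℝ ({u, v, w} : Set (ℝ×ℝ)) := by
  rcases eq_or_ne v u with he | hne
  · rw [he]
    have : ({u, u, w} : Set (ℝ×ℝ)) = {u, w} := by simp
    rw [this]; exact collinear_pair ℝ u w
  rw [collinear_iff_exists_forall_eq_smul_vadd]
  refine ⟨u, v - u, ?_⟩
  intro q hq
  unfold X at h
  have key : ∀ k : ℝ, q.1 = k*(v.1-u.1) + u.1 → q.2 = k*(v.2-u.2) + u.2 →
      ∃ r : ℝ, q = r • (v - u) +ᵥ u := by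
    intro k h1 h2
    refine ⟨k, prodext _ _ ?_ ?_⟩ <;> simp [h1, h2]
  rcases hq with rfl | rfl | rfl
  · exact key 0 (by ring) (by ring)
  · exact key 1 (by ring) (by ring)
  · rcases eq_or_ne (v.1 - u.1) 0 with h1 | h1
    · have h2 : v.2 - u.2 ≠ 0 := by
        intro h2; exact hne (prodext _ _ (by linarith) (by linarith))
      refine key ((q.2 - u.2)/(v.2 - u.2)) ?_ ?_
      · rw [h1, mul_zero, zero_add]
        have h' := h
        rw [h1, zero_mul, zero_sub, neg_eq_zero] at h'
        rcases mul_eq_zero.mp h' with hc | hc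
        · exact absurd hc h2
        · linarith
      · field_simp; ring
    · refine key ((q.1 - u.1)/(v.1 - u.1)) ?_ ?_
      · field_simp; ring
      · field_simp
        nlinarith [h]

lemma exists_param (u v w : ℝ×ℝ) (h : X u v w = 0) (hne : u ≠ v) :
    ∃ k : ℝ, w.1 = (1-k)*u.1 + k*v.1 ∧ w.2 = (1-k)*u.2 + k*v.2 := by
  unfold X at h
  rcases eq_or_ne (v.1 - u.1) 0 with h1 | h1
  · have h2 : v.2 - u.2 ≠ 0 := by
      intro h2; exact hne (prodext _ _ (by linarith) (by linarith))
    refine ⟨(w.2 - u.2)/(v.2 - u.2), ?_, ?_⟩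
    · have h' := h
      rw [h1, zero_mul, zero_sub, neg_eq_zero] at h'
      rcases mul_eq_zero.mp h' with hc | hc
      · exact absurd hc h2
      · have hv : v.1 = u.1 := by linarith
        rw [hv]; field_simp; linarith
    · field_simp; ring
  · refine ⟨(w.1 - u.1)/(v.1 - u.1), ?_, ?_⟩
    · field_simp; ring
    · field_simp; nlinarith [h]

lemma opp_prod {u v : ℝ} (h : 0 < u*v) : (u < 0 ↔ v < 0) := by
  constructor <;> intro h' <;> nlinarith


/-- Key lemma: if `q` is strictly inside the triangle `p r s`, no connected set avoiding
the four segments `[p,r],[p,s],[q,r],[q,s]` can meet both the open segment `(p,q)` and the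
open segment `(r,s)`. -/
lemma L1 {O : Set (ℝ×ℝ)} (hconn : IsPreconnected O)
    (p q r s : ℝ×ℝ) (hD : 0 < X p r s)
    (l m n : ℝ) (hl : 0 < l) (hm : 0 < m) (hn : 0 < n) (hsum : l + m + n = 1)
    (hq1 : q.1 = l*p.1 + m*r.1 + n*s.1) (hq2 : q.2 = l*p.2 + m*r.2 + n*s.2)
    (epr : ∀ z ∈ O, z ∉ segment ℝ p r) (eps : ∀ z ∈ O, z ∉ segment ℝ p s)
    (eqr : ∀ z ∈ O, z ∉ segment ℝ q r) (eqs : ∀ z ∈ O, z ∉ segment ℝ q s)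
    (hc : (O ∩ openSegment ℝ p q).Nonempty)
    (hd : (O ∩ openSegment ℝ r s).Nonempty) : False := by
  have hn' : n = 1 - l - m := by linarith
  subst hn'
  set D := X p r s with hDdef
  have hT1 : ∀ z : ℝ×ℝ, X s q z = l * X s p z - m * X r s z := by
    intro z; unfold X; rw [hq1, hq2]; ring
  have hT2 : ∀ z : ℝ×ℝ, X q r z = l * X p r z - (1-l-m) * X r s z := by
    intro z; unfold X; rw [hq1, hq2]; ring
  have hXrsq : X r s q = l * D := by rw [hDdef]; unfold X; rw [hq1, hq2]; ring
  have hsumz : ∀ z : ℝ×ℝ, X r s z + X s p z + X p r z = D := fun z => X_sum p r s z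
  set U : Set (ℝ×ℝ) := {z | 0 < X r s z ∧ 0 < X s p z ∧ 0 < X p r z ∧ (X s q z < 0 ∨ X q r z < 0)}
    with hU
  set W : Set (ℝ×ℝ) := {z | X r s z < 0 ∨ X s p z < 0 ∨ X p r z < 0 ∨
      (0 < X r s z ∧ 0 < X s q z ∧ 0 < X q r z) ∨
      (0 < X s p z ∧ 0 < X p r z ∧ 0 < X s q z ∧ 0 < X q r z)} with hW
  have op1 : ∀ (u v : ℝ×ℝ), IsOpen {z : ℝ×ℝ | 0 < X u v z} :=
    fun u v => isOpen_lt continuous_const (contX u v)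
  have op2 : ∀ (u v : ℝ×ℝ), IsOpen {z : ℝ×ℝ | X u v z < 0} :=
    fun u v => isOpen_lt (contX u v) continuous_const
  have hUopen : IsOpen U :=
    (op1 r s).and ((op1 s p).and ((op1 p r).and ((op2 s q).union (op2 q r))))
  have hWopen : IsOpen W :=
    (op2 r s).union ((op2 s p).union ((op2 p r).union
      (((op1 r s).and ((op1 s q).and (op1 q r))).union
        ((op1 s p).and ((op1 p r).and ((op1 s q).and (op1 q r)))))))
  -- disjointness
  have hdisj : ∀ z, z ∈ U → z ∈ W → False := by
    intro z hzU hzW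
    obtain ⟨hP, hR, hS, hT⟩ := hzU
    rcases hzW with h | h | h | ⟨_, h1, h2⟩ | ⟨_, _, h1, h2⟩ <;>
      rcases hT with hT | hT <;> linarith
  -- cover
  have hcover : O ⊆ U ∪ W := by
    intro z hzO
    have hPRS := hsumz z
    rcases lt_trichotomy (X r s z) 0 with hP | hP | hP
    · exact Or.inr (Or.inl hP)
    · rcases lt_trichotomy (X s p z) 0 with hR | hR | hR
      · exact Or.inr (Or.inr (Or.inl hR))
      · -- z = s
        have hS' : X p r z = D := by linarith
        have h1 : D * z.1 = D * s.1 := by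
          have := X_recon1 p r s z; rw [hP, hR, hS'] at this; linarith
        have h2 : D * z.2 = D * s.2 := by
          have := X_recon2 p r s z; rw [hP, hR, hS'] at this; linarith
        have hz : z = s := eq_of_scaled _ _ _ (ne_of_gt hD) h1 h2
        exact absurd (by rw [hz]; exact right_mem_segment ℝ q s) (eqs z hzO)
      · rcases lt_trichotomy (X p r z) 0 with hS | hS | hS
        · exact Or.inr (Or.inr (Or.inr (Or.inl hS)))
        · -- z = r
          have hR' : X s p z = D := by linarith
          have h1 : D * z.1 = D * r.1 := by
            have := X_recon1 p r s z; rw [hP, hR', hS] at this; linarith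
          have h2 : D * z.2 = D * r.2 := by
            have := X_recon2 p r s z; rw [hP, hR', hS] at this; linarith
          have hz : z = r := eq_of_scaled _ _ _ (ne_of_gt hD) h1 h2
          exact absurd (by rw [hz]; exact right_mem_segment ℝ q r) (eqr z hzO)
        · refine Or.inr (Or.inr (Or.inr (Or.inr (Or.inr ⟨hR, hS, ?_, ?_⟩))))
          · rw [hT1 z, hP]
            have he : l * X s p z - m * 0 = l * X s p z := by ring
            rw [he]; positivity
          · rw [hT2 z, hP]
            have he : l * X p r z - (1-l-m) * 0 = l * X p r z := by ring
            rw [he]; positivity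
    · rcases lt_trichotomy (X s p z) 0 with hR | hR | hR
      · exact Or.inr (Or.inr (Or.inl hR))
      · rcases le_or_gt 0 (X p r z) with hS | hS
        · -- z ∈ segment p s
          refine absurd (mem_seg_div p s z (X r s z) (X p r z) D hD (le_of_lt hP) hS
            (by linarith) ?_ ?_) (eps z hzO)
          · have := X_recon1 p r s z; rw [hR] at this; linarith
          · have := X_recon2 p r s z; rw [hR] at this; linarith
        · exact Or.inr (Or.inr (Or.inr (Or.inl hS)))
      · rcases lt_trichotomy (X p r z) 0 with hS | hS | hS
        · exact Or.inr (Or.inr (Or.inr (Or.inl hS)))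
        · -- z ∈ segment p r
          refine absurd (mem_seg_div p r z (X r s z) (X s p z) D hD (le_of_lt hP)
            (le_of_lt hR) (by linarith) ?_ ?_) (epr z hzO)
          · have := X_recon1 p r s z; rw [hS] at this; linarith
          · have := X_recon2 p r s z; rw [hS] at this; linarith
        · -- interior of triangle: case on the (q,r,s)-coordinates
          have hsumz' := X_sum q r s z
          have hrec1' := X_recon1 q r s z
          have hrec2' := X_recon2 q r s z
          have hD' : 0 < X q r s := by
            have h1 : X q r s = X r s q := by rw [X_cyc q r s]
            rw [h1, hXrsq]; positivity
          rcases lt_trichotomy (X s q z) 0 with hT | hT | hT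
          · exact Or.inl ⟨hP, hR, hS, Or.inl hT⟩
          · rcases le_or_gt 0 (X q r z) with hT2' | hT2'
            · -- z ∈ segment q s
              refine absurd (mem_seg_div q s z (X r s z) (X q r z) (X q r s) hD'
                (le_of_lt hP) hT2' (by linarith) ?_ ?_) (eqs z hzO)
              · rw [hT] at hrec1'; linarith
              · rw [hT] at hrec2'; linarith
            · exact Or.inl ⟨hP, hR, hS, Or.inr hT2'⟩
          · rcases lt_trichotomy (X q r z) 0 with hT2' | hT2' | hT2'
            · exact Or.inl ⟨hP, hR, hS, Or.inr hT2'⟩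
            · -- z ∈ segment q r
              refine absurd (mem_seg_div q r z (X r s z) (X s q z) (X q r s) hD'
                (le_of_lt hP) (le_of_lt hT) (by linarith) ?_ ?_) (eqr z hzO)
              · rw [hT2'] at hrec1'; linarith
              · rw [hT2'] at hrec2'; linarith
            · exact Or.inr (Or.inr (Or.inr (Or.inr (Or.inl ⟨hP, hT, hT2'⟩))))
  -- c ∈ U
  obtain ⟨c, hcO, hcseg⟩ := hc
  obtain ⟨tc, uc, htc, huc, htuc, hc1, hc2⟩ := openSeg_comps hcseg
  have hPc : X r s c = (tc + uc*l) * D := by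
    have := X_aff r s p q tc uc c htuc hc1 hc2
    rw [this, hXrsq]
    have : X r s p = D := by rw [hDdef, X_cyc p r s]
    rw [this]; ring
  have hRc : X s p c = uc * m * D := by
    have := X_aff s p p q tc uc c htuc hc1 hc2
    rw [this, X_uvv]
    have h2 : X s p q = m * D := by rw [hDdef]; unfold X; rw [hq1, hq2]; ring
    rw [h2]; ring
  have hSc : X p r c = uc * (1-l-m) * D := by
    have := X_aff p r p q tc uc c htuc hc1 hc2
    rw [this, X_uvu]
    have h2 : X p r q = (1-l-m) * D := by rw [hDdef]; unfold X; rw [hq1, hq2]; ring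
    rw [h2]; ring
  have hcU : c ∈ U := by
    refine ⟨by rw [hPc]; positivity, by rw [hRc]; positivity, ?_, Or.inl ?_⟩
    · rw [hSc]; exact mul_pos (mul_pos huc hn) hD
    · rw [hT1 c, hPc, hRc]
      have he : l * (uc * m * D) - m * ((tc + uc * l) * D) = -(m * tc * D) := by ring
      rw [he, neg_lt_zero]; exact mul_pos (mul_pos hm htc) hD
  -- d ∈ W
  obtain ⟨d, hdO, hdseg⟩ := hd
  obtain ⟨td, ud, htd, hud, htud, hd1, hd2⟩ := openSeg_comps hdseg
  have hPd : X r s d = 0 := by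
    have := X_aff r s r s td ud d htud hd1 hd2
    rw [this, X_uvu, X_uvv]; ring
  have hRd : X s p d = td * D := by
    have := X_aff s p r s td ud d htud hd1 hd2
    rw [this, X_uvu]
    have h2 : X s p r = D := by rw [hDdef]; unfold X; ring
    rw [h2]; ring
  have hSd : X p r d = ud * D := by
    have := X_aff p r r s td ud d htud hd1 hd2
    rw [this, X_uvv]
    have h2 : X p r s = D := hDdef.symm
    rw [h2]; ring
  have hdW : d ∈ W := by
    refine Or.inr (Or.inr (Or.inr (Or.inr ⟨by rw [hRd]; positivity, by rw [hSd]; positivity,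
      ?_, ?_⟩)))
    · rw [hT1 d, hPd, hRd]
      have he : l * (td * D) - m * 0 = l * td * D := by ring
      rw [he]; positivity
    · rw [hT2 d, hPd, hSd]
      have he : l * (ud * D) - (1-l-m) * 0 = l * ud * D := by ring
      rw [he]; positivity
  obtain ⟨z, hzO, hzU, hzW⟩ := hconn U W hUopen hWopen hcover ⟨c, hcO, hcU⟩ ⟨d, hdO, hdW⟩
  exact hdisj z hzU hzW


lemma X_swap23 (u v w : ℝ×ℝ) : X u v w = -X u w v := by unfold X; ring

lemma avoid_symm {O : Set (ℝ×ℝ)} {a b : ℝ×ℝ} (h : ∀ z ∈ O, z ∉ segment ℝ a b) :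
    ∀ z ∈ O, z ∉ segment ℝ b a := fun z hz hm => h z hz (by rwa [segment_symm] at hm)

lemma open_symm {O : Set (ℝ×ℝ)} {a b : ℝ×ℝ} (h : (O ∩ openSegment ℝ a b).Nonempty) :
    (O ∩ openSegment ℝ b a).Nonempty := by rwa [openSegment_symm] at h

lemma neg_of_scaled {D A B : ℝ} (h : D * A = B) (hD : 0 < D) (hB : B < 0) : A < 0 := by
  nlinarith

lemma pos_of_scaled {D A B : ℝ} (h : D * A = B) (hD : 0 < D) (hB : 0 < B) : 0 < A := by
  nlinarith

lemma pos_of_mul_pos' {u Y : ℝ} (h : 0 < u * Y) (hu : 0 < u) : 0 < Y := by nlinarith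

lemma L1' {O : Set (ℝ×ℝ)} (hconn : IsPreconnected O)
    (p q r s : ℝ×ℝ) (hD : X p r s ≠ 0)
    (l m n : ℝ) (hl : 0 < l) (hm : 0 < m) (hn : 0 < n) (hsum : l + m + n = 1)
    (hq1 : q.1 = l*p.1 + m*r.1 + n*s.1) (hq2 : q.2 = l*p.2 + m*r.2 + n*s.2)
    (epr : ∀ z ∈ O, z ∉ segment ℝ p r) (eps : ∀ z ∈ O, z ∉ segment ℝ p s)
    (eqr : ∀ z ∈ O, z ∉ segment ℝ q r) (eqs : ∀ z ∈ O, z ∉ segment ℝ q s)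
    (hc : (O ∩ openSegment ℝ p q).Nonempty)
    (hd : (O ∩ openSegment ℝ r s).Nonempty) : False := by
  rcases hD.lt_or_gt with h | h
  · have hD' : 0 < X p s r := by
      have : X p s r = -X p r s := by unfold X; ring
      rw [this]; linarith
    exact L1 hconn p q s r hD' l n m hl hn hm (by linarith)
      (by rw [hq1]; ring) (by rw [hq2]; ring) eps epr eqs eqr hc (open_symm hd)
  · exact L1 hconn p q r s h l m n hl hm hn hsum hq1 hq2 epr eps eqr eqs hc hd

/-- Second key lemma: if `b1` and `b2` are strictly on opposite sides of the line `a1 a2`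
(with `b1` on the positive side) and `b3` is on the positive side as well, we get a
contradiction. -/
lemma core {O : Set (ℝ×ℝ)} (hconn : IsPreconnected O) (a1 a2 b1 b2 b3 : ℝ×ℝ)
    (e11 : ∀ z ∈ O, z ∉ segment ℝ a1 b1) (e12 : ∀ z ∈ O, z ∉ segment ℝ a1 b2)
    (e13 : ∀ z ∈ O, z ∉ segment ℝ a1 b3) (e21 : ∀ z ∈ O, z ∉ segment ℝ a2 b1)
    (e22 : ∀ z ∈ O, z ∉ segment ℝ a2 b2) (e23 : ∀ z ∈ O, z ∉ segment ℝ a2 b3)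
    (hb1 : 0 < X a1 a2 b1) (hb2 : X a1 a2 b2 < 0) (hb3 : 0 < X a1 a2 b3)
    (hc : (O ∩ openSegment ℝ a1 a2).Nonempty)
    (hd13 : (O ∩ openSegment ℝ b1 b3).Nonempty) : False := by
  have hsum1 : ∀ z, X a2 b1 z + X b1 a1 z + X a1 a2 z = X a1 a2 b1 :=
    fun z => X_sum a1 a2 b1 z
  have hsum2 : ∀ z, X a2 b2 z + X b2 a1 z + X a1 a2 z = X a1 a2 b2 :=
    fun z => X_sum a1 a2 b2 z
  have hcyc1 : X a2 b1 a1 = X a1 a2 b1 := by rw [X_cyc a2 b1 a1, X_cyc b1 a1 a2]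
  have hcyc1' : X b1 a1 a2 = X a1 a2 b1 := by rw [X_cyc b1 a1 a2]
  have hcyc2 : X a2 b2 a1 = X a1 a2 b2 := by rw [X_cyc a2 b2 a1, X_cyc b2 a1 a2]
  have hcyc2' : X b2 a1 a2 = X a1 a2 b2 := by rw [X_cyc b2 a1 a2]
  set U2 : Set (ℝ×ℝ) := {z | (0 < X a2 b1 z ∧ 0 < X b1 a1 z ∧ 0 < X a1 a2 z) ∨
      (X a2 b2 z < 0 ∧ X b2 a1 z < 0 ∧ X a1 a2 z < 0) ∨
      (0 < X a2 b1 z ∧ 0 < X b1 a1 z ∧ X a2 b2 z < 0 ∧ X b2 a1 z < 0)} with hU2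
  set W2 : Set (ℝ×ℝ) := {z | (0 < X a1 a2 z ∧ (X a2 b1 z < 0 ∨ X b1 a1 z < 0)) ∨
      (X a1 a2 z < 0 ∧ (0 < X a2 b2 z ∨ 0 < X b2 a1 z)) ∨
      (X a2 b1 z < 0 ∧ 0 < X a2 b2 z) ∨ (X b1 a1 z < 0 ∧ 0 < X b2 a1 z)} with hW2
  have op1 : ∀ (u v : ℝ×ℝ), IsOpen {z : ℝ×ℝ | 0 < X u v z} :=
    fun u v => isOpen_lt continuous_const (contX u v)
  have op2 : ∀ (u v : ℝ×ℝ), IsOpen {z : ℝ×ℝ | X u v z < 0} :=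
    fun u v => isOpen_lt (contX u v) continuous_const
  have hUopen : IsOpen U2 :=
    ((op1 a2 b1).and ((op1 b1 a1).and (op1 a1 a2))).union
      (((op2 a2 b2).and ((op2 b2 a1).and (op2 a1 a2))).union
        ((op1 a2 b1).and ((op1 b1 a1).and ((op2 a2 b2).and (op2 b2 a1)))))
  have hWopen : IsOpen W2 :=
    ((op1 a1 a2).and ((op2 a2 b1).union (op2 b1 a1))).union
      (((op2 a1 a2).and ((op1 a2 b2).union (op1 b2 a1))).union
        (((op2 a2 b1).and (op1 a2 b2)).union ((op2 b1 a1).and (op1 b2 a1))))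
  have hdisj : ∀ z, z ∈ U2 → z ∈ W2 → False := by
    intro z hzU hzW
    rcases hzU with ⟨u1, u2, u3⟩ | ⟨u1, u2, u3⟩ | ⟨u1, u2, u3, u4⟩ <;>
      rcases hzW with ⟨w1, w2 | w2⟩ | ⟨w1, w2 | w2⟩ | ⟨w1, w2⟩ | ⟨w1, w2⟩ <;> linarith
  have hcover : O ⊆ U2 ∪ W2 := by
    intro z hzO
    have hs1 := hsum1 z
    have hs2 := hsum2 z
    have hr11 := X_recon1 a1 a2 b1 z
    have hr12 := X_recon2 a1 a2 b1 z
    have hr21 := X_recon1 a1 a2 b2 z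
    have hr22 := X_recon2 a1 a2 b2 z
    rcases lt_trichotomy (X a1 a2 z) 0 with hF | hF | hF
    · -- below the line: use the (a1,a2,b2)-coordinates
      rcases lt_trichotomy (X a2 b2 z) 0 with hA | hA | hA
      · rcases lt_trichotomy (X b2 a1 z) 0 with hB | hB | hB
        · exact Or.inl (Or.inr (Or.inl ⟨hA, hB, hF⟩))
        · -- z ∈ [a1, b2]
          refine absurd (mem_seg_div a1 b2 z (-(X a2 b2 z)) (-(X a1 a2 z)) (-(X a1 a2 b2))
            (by linarith) (by linarith) (by linarith) (by linarith) ?_ ?_) (e12 z hzO)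
          · rw [hB] at hr21; linarith
          · rw [hB] at hr22; linarith
        · exact Or.inr (Or.inr (Or.inl ⟨hF, Or.inr hB⟩))
      · rcases le_or_gt (X b2 a1 z) 0 with hB | hB
        · -- z ∈ [a2, b2]
          refine absurd (mem_seg_div a2 b2 z (-(X b2 a1 z)) (-(X a1 a2 z)) (-(X a1 a2 b2))
            (by linarith) (by linarith) (by linarith) (by linarith) ?_ ?_) (e22 z hzO)
          · rw [hA] at hr21; linarith
          · rw [hA] at hr22; linarith
        · exact Or.inr (Or.inr (Or.inl ⟨hF, Or.inr hB⟩))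
      · exact Or.inr (Or.inr (Or.inl ⟨hF, Or.inl hA⟩))
    · -- on the line
      have hA1B1 : X a2 b1 z + X b1 a1 z = X a1 a2 b1 := by linarith
      have hz1 : X a1 a2 b1 * z.1 = X a2 b1 z * a1.1 + X b1 a1 z * a2.1 := by
        rw [hF] at hr11; linarith
      have hz2 : X a1 a2 b1 * z.2 = X a2 b1 z * a1.2 + X b1 a1 z * a2.2 := by
        rw [hF] at hr12; linarith
      have hrel1 : X a1 a2 b1 * X a2 b2 z = X a2 b1 z * X a1 a2 b2 := by
        have := X_aff_scaled a2 b2 a1 a2 z (X a2 b1 z) (X b1 a1 z) (X a1 a2 b1)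
          hA1B1 (by linarith) (by linarith)
        rw [hcyc2, X_uvu] at this; linarith
      have hrel2 : X a1 a2 b1 * X b2 a1 z = X b1 a1 z * X a1 a2 b2 := by
        have := X_aff_scaled b2 a1 a1 a2 z (X a2 b1 z) (X b1 a1 z) (X a1 a2 b1)
          hA1B1 (by linarith) (by linarith)
        rw [hcyc2', X_uvv] at this; linarith
      rcases lt_trichotomy (X a2 b1 z) 0 with hA | hA | hA
      · refine Or.inr (Or.inr (Or.inr (Or.inl ⟨hA, ?_⟩)))
        exact pos_of_scaled hrel1 hb1 (mul_pos_of_neg_of_neg hA hb2)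
      · -- z = a2
        have hB : X b1 a1 z = X a1 a2 b1 := by linarith
        have hz : z = a2 := by
          refine eq_of_scaled z a2 (X a1 a2 b1) (ne_of_gt hb1) ?_ ?_
          · rw [hA, hB] at hz1; linarith
          · rw [hA, hB] at hz2; linarith
        exact absurd (by rw [hz]; exact left_mem_segment ℝ a2 b1) (e21 z hzO)
      · rcases lt_trichotomy (X b1 a1 z) 0 with hB | hB | hB
        · refine Or.inr (Or.inr (Or.inr (Or.inr ⟨hB, ?_⟩)))
          exact pos_of_scaled hrel2 hb1 (mul_pos_of_neg_of_neg hB hb2)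
        · -- z = a1
          have hA' : X a2 b1 z = X a1 a2 b1 := by linarith
          have hz : z = a1 := by
            refine eq_of_scaled z a1 (X a1 a2 b1) (ne_of_gt hb1) ?_ ?_
            · rw [hB, hA'] at hz1; linarith
            · rw [hB, hA'] at hz2; linarith
          exact absurd (by rw [hz]; exact left_mem_segment ℝ a1 b1) (e11 z hzO)
        · exact Or.inl (Or.inr (Or.inr ⟨hA, hB,
            neg_of_scaled hrel1 hb1 (mul_neg_of_pos_of_neg hA hb2),
            neg_of_scaled hrel2 hb1 (mul_neg_of_pos_of_neg hB hb2)⟩))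
    · -- above the line: use the (a1,a2,b1)-coordinates
      rcases lt_trichotomy (X a2 b1 z) 0 with hA | hA | hA
      · exact Or.inr (Or.inl ⟨hF, Or.inl hA⟩)
      · rcases lt_or_ge (X b1 a1 z) 0 with hB | hB
        · exact Or.inr (Or.inl ⟨hF, Or.inr hB⟩)
        · -- z ∈ [a2, b1]
          refine absurd (mem_seg_div a2 b1 z (X b1 a1 z) (X a1 a2 z) (X a1 a2 b1)
            hb1 hB (by linarith) (by linarith) ?_ ?_) (e21 z hzO)
          · rw [hA] at hr11; linarith
          · rw [hA] at hr12; linarith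
      · rcases lt_trichotomy (X b1 a1 z) 0 with hB | hB | hB
        · exact Or.inr (Or.inl ⟨hF, Or.inr hB⟩)
        · -- z ∈ [a1, b1]
          refine absurd (mem_seg_div a1 b1 z (X a2 b1 z) (X a1 a2 z) (X a1 a2 b1)
            hb1 (by linarith) (by linarith) (by linarith) ?_ ?_) (e11 z hzO)
          · rw [hB] at hr11; linarith
          · rw [hB] at hr12; linarith
        · exact Or.inl (Or.inl ⟨hA, hB, hF⟩)
  -- the blocker on (a1, a2) lies in U2
  obtain ⟨c, hcO, hcseg⟩ := hc
  obtain ⟨tc, uc, htc, huc, htuc, hc1, hc2⟩ := openSeg_comps hcseg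
  have hA1c : X a2 b1 c = tc * X a1 a2 b1 := by
    rw [X_aff a2 b1 a1 a2 tc uc c htuc hc1 hc2, hcyc1, X_uvu]; ring
  have hB1c : X b1 a1 c = uc * X a1 a2 b1 := by
    rw [X_aff b1 a1 a1 a2 tc uc c htuc hc1 hc2, hcyc1', X_uvv]; ring
  have hA2c : X a2 b2 c = tc * X a1 a2 b2 := by
    rw [X_aff a2 b2 a1 a2 tc uc c htuc hc1 hc2, hcyc2, X_uvu]; ring
  have hB2c : X b2 a1 c = uc * X a1 a2 b2 := by
    rw [X_aff b2 a1 a1 a2 tc uc c htuc hc1 hc2, hcyc2', X_uvv]; ring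
  have hcU : c ∈ U2 := by
    refine Or.inr (Or.inr ⟨?_, ?_, ?_, ?_⟩)
    · rw [hA1c]; positivity
    · rw [hB1c]; positivity
    · rw [hA2c]; exact mul_neg_of_pos_of_neg htc hb2
    · rw [hB2c]; exact mul_neg_of_pos_of_neg huc hb2
  have hnotW : ∀ z ∈ O, z ∉ W2 := by
    intro z hz hzW
    obtain ⟨w, _, hwU, hwW⟩ := hconn U2 W2 hUopen hWopen hcover ⟨c, hcO, hcU⟩ ⟨z, hz, hzW⟩
    exact hdisj w hwU hwW
  -- the blocker on (b1, b3)
  obtain ⟨e, heO, heseg⟩ := hd13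
  obtain ⟨te, ue, hte, hue, htue, he1, he2⟩ := openSeg_comps heseg
  have hFe : 0 < X a1 a2 e := by
    rw [X_aff a1 a2 b1 b3 te ue e htue he1 he2]; positivity
  have heU : e ∈ U2 := (hcover heO).resolve_right (hnotW e heO)
  have hkey : 0 < X a2 b1 e ∧ 0 < X b1 a1 e := by
    rcases heU with ⟨u1, u2, _⟩ | ⟨_, _, u3⟩ | ⟨u1, u2, _, _⟩
    · exact ⟨u1, u2⟩
    · linarith
    · exact ⟨u1, u2⟩
  have hA1e : X a2 b1 e = ue * X a2 b1 b3 := by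
    rw [X_aff a2 b1 b1 b3 te ue e htue he1 he2, X_uvv]; ring
  have hB1e : X b1 a1 e = ue * X b1 a1 b3 := by
    rw [X_aff b1 a1 b1 b3 te ue e htue he1 he2, X_uvu]; ring
  have hm' : 0 < X a2 b1 b3 := by
    have h := hkey.1; rw [hA1e] at h; exact pos_of_mul_pos' h hue
  have hn' : 0 < X b1 a1 b3 := by
    have h := hkey.2; rw [hB1e] at h; exact pos_of_mul_pos' h hue
  -- b3 is a positive combination of b1, a1, a2 : apply L1'
  have hs3 := hsum1 b3
  have hq1' : b3.1 = (X a1 a2 b3 / X a1 a2 b1)*b1.1 + (X a2 b1 b3 / X a1 a2 b1)*a1.1 +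
      (X b1 a1 b3 / X a1 a2 b1)*a2.1 := by
    have := X_recon1 a1 a2 b1 b3
    field_simp
    linarith
  have hq2' : b3.2 = (X a1 a2 b3 / X a1 a2 b1)*b1.2 + (X a2 b1 b3 / X a1 a2 b1)*a1.2 +
      (X b1 a1 b3 / X a1 a2 b1)*a2.2 := by
    have := X_recon2 a1 a2 b1 b3
    field_simp
    linarith
  refine L1' hconn b1 b3 a1 a2 (by rw [hcyc1']; exact ne_of_gt hb1)
    (X a1 a2 b3 / X a1 a2 b1) (X a2 b1 b3 / X a1 a2 b1) (X b1 a1 b3 / X a1 a2 b1)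
    (by positivity) (by positivity) (by positivity) (by field_simp; linarith)
    hq1' hq2' (avoid_symm e11) (avoid_symm e21) (avoid_symm e13) (avoid_symm e23)
    ⟨e, heO, heseg⟩ ⟨c, hcO, hcseg⟩


/-- If `b1` and `b2` are strictly on opposite sides of the line through `a1, a2`,
we get a contradiction. -/
lemma claim1 {O : Set (ℝ×ℝ)} (hconn : IsPreconnected O) (a1 a2 b1 b2 b3 : ℝ×ℝ)
    (e11 : ∀ z ∈ O, z ∉ segment ℝ a1 b1) (e12 : ∀ z ∈ O, z ∉ segment ℝ a1 b2)
    (e13 : ∀ z ∈ O, z ∉ segment ℝ a1 b3) (e21 : ∀ z ∈ O, z ∉ segment ℝ a2 b1)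
    (e22 : ∀ z ∈ O, z ∉ segment ℝ a2 b2) (e23 : ∀ z ∈ O, z ∉ segment ℝ a2 b3)
    (nc3 : X a1 a2 b3 ≠ 0)
    (hprod : X a1 a2 b1 * X a1 a2 b2 < 0)
    (hc : (O ∩ openSegment ℝ a1 a2).Nonempty)
    (hd13 : (O ∩ openSegment ℝ b1 b3).Nonempty)
    (hd23 : (O ∩ openSegment ℝ b2 b3).Nonempty) : False := by
  have hsw : ∀ w : ℝ×ℝ, X a2 a1 w = -X a1 a2 w := fun w => (X_swap12 a2 a1 w).trans (by ring)
  rcases nc3.lt_or_gt with h3 | h3 <;> rcases lt_trichotomy (X a1 a2 b1) 0 with h1 | h1 | h1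
  · -- f b3 < 0, f b1 < 0, so f b2 > 0 : core (a2, a1, b1, b2, b3)
    have h2 : 0 < X a1 a2 b2 := by nlinarith
    exact core hconn a2 a1 b1 b2 b3 e21 e22 e23 e11 e12 e13
      (by rw [hsw]; linarith) (by rw [hsw]; linarith) (by rw [hsw]; linarith)
      (open_symm hc) hd13
  · rw [h1, zero_mul] at hprod; exact lt_irrefl _ hprod
  · -- f b3 < 0, f b1 > 0, f b2 < 0 : core (a2, a1, b2, b1, b3)
    have h2 : X a1 a2 b2 < 0 := by nlinarith
    exact core hconn a2 a1 b2 b1 b3 e22 e21 e23 e12 e11 e13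
      (by rw [hsw]; linarith) (by rw [hsw]; linarith) (by rw [hsw]; linarith)
      (open_symm hc) hd23
  · -- f b3 > 0, f b1 < 0, f b2 > 0 : core (a1, a2, b2, b1, b3)
    have h2 : 0 < X a1 a2 b2 := by nlinarith
    exact core hconn a1 a2 b2 b1 b3 e12 e11 e13 e22 e21 e23 h2 h1 h3 hc hd23
  · rw [h1, zero_mul] at hprod; exact lt_irrefl _ hprod
  · -- f b3 > 0, f b1 > 0, f b2 < 0 : core (a1, a2, b1, b2, b3)
    have h2 : X a1 a2 b2 < 0 := by nlinarith
    exact core hconn a1 a2 b1 b2 b3 e11 e12 e13 e21 e22 e23 h1 h2 h3 hc hd13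

/-- If `a1` and `a2` are strictly on opposite sides of the line through `b1, b2`,
we get a contradiction. -/
lemma claim2 {O : Set (ℝ×ℝ)} (hconn : IsPreconnected O) (a1 a2 b1 b2 b3 : ℝ×ℝ)
    (e11 : ∀ z ∈ O, z ∉ segment ℝ a1 b1) (e12 : ∀ z ∈ O, z ∉ segment ℝ a1 b2)
    (e13 : ∀ z ∈ O, z ∉ segment ℝ a1 b3) (e21 : ∀ z ∈ O, z ∉ segment ℝ a2 b1)
    (e22 : ∀ z ∈ O, z ∉ segment ℝ a2 b2) (e23 : ∀ z ∈ O, z ∉ segment ℝ a2 b3)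
    (nc1 : X a1 a2 b1 ≠ 0) (nc2 : X a1 a2 b2 ≠ 0) (nc3 : X a1 a2 b3 ≠ 0)
    (hprod : X b1 b2 a1 * X b1 b2 a2 < 0)
    (hc : (O ∩ openSegment ℝ a1 a2).Nonempty)
    (hd12 : (O ∩ openSegment ℝ b1 b2).Nonempty)
    (hd13 : (O ∩ openSegment ℝ b1 b3).Nonempty)
    (hd23 : (O ∩ openSegment ℝ b2 b3).Nonempty) : False := by
  have hg1ne : X b1 b2 a1 ≠ 0 := by
    intro h; rw [h, zero_mul] at hprod; exact lt_irrefl _ hprod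
  have hsigns : (0 < X b1 b2 a1 ∧ X b1 b2 a2 < 0 ∧ 0 < X b1 b2 a1 - X b1 b2 a2) ∨
      (X b1 b2 a1 < 0 ∧ 0 < X b1 b2 a2 ∧ X b1 b2 a1 - X b1 b2 a2 < 0) := by
    rcases hg1ne.lt_or_gt with h | h
    · right; refine ⟨h, ?_, ?_⟩ <;> nlinarith
    · left; refine ⟨h, ?_, ?_⟩ <;> nlinarith
  have hden : X b1 b2 a1 - X b1 b2 a2 ≠ 0 := by
    rcases hsigns with ⟨_, _, h⟩ | ⟨_, _, h⟩ <;> [exact ne_of_gt h; exact ne_of_lt h]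
  set t := X b1 b2 a1 / (X b1 b2 a1 - X b1 b2 a2) with ht
  have ht0 : 0 < t := by
    rcases hsigns with ⟨h1, _, h3⟩ | ⟨h1, _, h3⟩
    · exact div_pos h1 h3
    · exact div_pos_of_neg_of_neg h1 h3
  have ht1 : t < 1 := by
    have htm : 1 - t = (-X b1 b2 a2)/(X b1 b2 a1 - X b1 b2 a2) := by
      rw [ht]; field_simp; ring
    have h2 : 0 < 1 - t := by
      rw [htm]
      rcases hsigns with ⟨_, h2, h3⟩ | ⟨_, h2, h3⟩
      · exact div_pos (by linarith) h3
      · exact div_pos_of_neg_of_neg (by linarith) h3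
    linarith
  have hgt : (1-t) * X b1 b2 a1 + t * X b1 b2 a2 = 0 := by
    rw [ht]; field_simp; ring
  set w : ℝ×ℝ := ((1-t)*a1.1 + t*a2.1, (1-t)*a1.2 + t*a2.2) with hwdef
  have hw1 : w.1 = (1-t)*a1.1 + t*a2.1 := rfl
  have hw2 : w.2 = (1-t)*a1.2 + t*a2.2 := rfl
  have hgw : X b1 b2 w = 0 := by
    rw [X_aff b1 b2 a1 a2 (1-t) t w (by ring) hw1 hw2]; exact hgt
  have hb12 : b1 ≠ b2 := by
    intro h; apply hg1ne; rw [h]; exact X_uuw b2 a1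
  obtain ⟨k, hk1, hk2⟩ := exists_param b1 b2 w hgw hb12
  have hFw : X a1 a2 w = 0 := by
    rw [X_aff a1 a2 a1 a2 (1-t) t w (by ring) hw1 hw2, X_uvu, X_uvv]; ring
  have hFw' : X a1 a2 w = (1-k) * X a1 a2 b1 + k * X a1 a2 b2 :=
    X_aff a1 a2 b1 b2 (1-k) k w (by ring) hk1 hk2
  rcases lt_trichotomy k 0 with hk | hk | hk
  · -- b1 is a positive combination of b2, a1, a2
    have hne : (1:ℝ) - k ≠ 0 := by intro h; linarith
    have hlin1 : (1-k)*b1.1 = (-k)*b2.1 + (1-t)*a1.1 + t*a2.1 := by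
      linarith [hk1, hw1]
    have hlin2 : (1-k)*b1.2 = (-k)*b2.2 + (1-t)*a1.2 + t*a2.2 := by
      linarith [hk2, hw2]
    have hq1 : b1.1 = (-k/(1-k))*b2.1 + ((1-t)/(1-k))*a1.1 + (t/(1-k))*a2.1 := by
      rw [div_mul_eq_mul_div, div_mul_eq_mul_div, div_mul_eq_mul_div, ← add_div,
        ← add_div, eq_div_iff hne]
      linarith [hlin1]
    have hq2 : b1.2 = (-k/(1-k))*b2.2 + ((1-t)/(1-k))*a1.2 + (t/(1-k))*a2.2 := by
      rw [div_mul_eq_mul_div, div_mul_eq_mul_div, div_mul_eq_mul_div, ← add_div,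
        ← add_div, eq_div_iff hne]
      linarith [hlin2]
    refine L1' hconn b2 b1 a1 a2 ?_ (-k/(1-k)) ((1-t)/(1-k)) (t/(1-k))
      (div_pos (by linarith) (by linarith)) (div_pos (by linarith) (by linarith))
      (div_pos (by linarith) (by linarith))
      (by rw [← add_div, ← add_div, div_eq_one_iff_eq hne]; ring) hq1 hq2
      (avoid_symm e12) (avoid_symm e22) (avoid_symm e11) (avoid_symm e21)
      (open_symm hd12) hc
    · have hcy : X b2 a1 a2 = X a1 a2 b2 := by rw [X_cyc b2 a1 a2]
      rw [hcy]; exact nc2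
  · -- w = b1 : then b1 is on the line a1 a2, contradiction with noncollinearity
    apply nc1
    rw [hk] at hk1 hk2
    norm_num at hk1 hk2
    have hb1w : b1 = w := prodext _ _ hk1.symm hk2.symm
    rw [hb1w]; exact hFw
  · rcases lt_trichotomy k 1 with hk' | hk' | hk'
    · -- the crossing point is interior to both segments : b1, b2 on opposite sides of a1 a2
      have hprod' : X a1 a2 b1 * X a1 a2 b2 < 0 := by
        have hrel : (1-k) * X a1 a2 b1 = -(k * X a1 a2 b2) := by
          rw [hFw] at hFw'; linarith
        rcases nc1.lt_or_gt with h | h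
        · have h2 : 0 < X a1 a2 b2 := by nlinarith
          exact mul_neg_of_neg_of_pos h h2
        · have h2 : X a1 a2 b2 < 0 := by nlinarith
          exact mul_neg_of_pos_of_neg h h2
      exact claim1 hconn a1 a2 b1 b2 b3 e11 e12 e13 e21 e22 e23 nc3 hprod' hc hd13 hd23
    · -- w = b2
      apply nc2
      rw [hk'] at hk1 hk2
      norm_num at hk1 hk2
      have hb2w : b2 = w := prodext _ _ hk1.symm hk2.symm
      rw [hb2w]; exact hFw
    · -- b2 is a positive combination of b1, a1, a2
      have hne : k ≠ 0 := by intro h; linarith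
      have hlin1 : k*b2.1 = (k-1)*b1.1 + (1-t)*a1.1 + t*a2.1 := by
        linarith [hk1, hw1]
      have hlin2 : k*b2.2 = (k-1)*b1.2 + (1-t)*a1.2 + t*a2.2 := by
        linarith [hk2, hw2]
      have hq1 : b2.1 = ((k-1)/k)*b1.1 + ((1-t)/k)*a1.1 + (t/k)*a2.1 := by
        rw [div_mul_eq_mul_div, div_mul_eq_mul_div, div_mul_eq_mul_div, ← add_div,
          ← add_div, eq_div_iff hne]
        linarith [hlin1]
      have hq2 : b2.2 = ((k-1)/k)*b1.2 + ((1-t)/k)*a1.2 + (t/k)*a2.2 := by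
        rw [div_mul_eq_mul_div, div_mul_eq_mul_div, div_mul_eq_mul_div, ← add_div,
          ← add_div, eq_div_iff hne]
        linarith [hlin2]
      refine L1' hconn b1 b2 a1 a2 ?_ ((k-1)/k) ((1-t)/k) (t/k)
        (div_pos (by linarith) (by linarith)) (div_pos (by linarith) (by linarith))
        (div_pos (by linarith) (by linarith))
        (by rw [← add_div, ← add_div, div_eq_one_iff_eq hne]; ring) hq1 hq2
        (avoid_symm e11) (avoid_symm e21) (avoid_symm e12) (avoid_symm e22)
        hd12 hc
      · have hcy : X b1 a1 a2 = X a1 a2 b1 := by rw [X_cyc b1 a1 a2]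
        rw [hcy]; exact nc1


lemma opp_prod' {u v : ℝ} (h : 0 < u*v) : (0 < u ↔ 0 < v) := by
  constructor <;> intro h' <;> nlinarith

lemma convex_zero (u v : ℝ×ℝ) : Convex ℝ {z : ℝ×ℝ | X u v z = 0} := by
  intro z1 hz1 z2 hz2 a b ha hb hab
  show X u v _ = 0
  rw [X_aff u v z1 z2 a b _ hab (by simp) (by simp)]
  simp only [Set.mem_setOf_eq] at hz1 hz2
  rw [hz1, hz2]; ring

lemma convex_pos (u v : ℝ×ℝ) : Convex ℝ {z : ℝ×ℝ | 0 < X u v z} := by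
  intro z1 hz1 z2 hz2 a b ha hb hab
  show 0 < X u v _
  rw [X_aff u v z1 z2 a b _ hab (by simp) (by simp)]
  simp only [Set.mem_setOf_eq] at hz1 hz2
  rcases eq_or_lt_of_le ha with h | h
  · rw [← h]; have hb1 : b = 1 := by linarith
    rw [hb1]; ring_nf; linarith
  · nlinarith
lemma convex_neg (u v : ℝ×ℝ) : Convex ℝ {z : ℝ×ℝ | X u v z < 0} := by
  intro z1 hz1 z2 hz2 a b ha hb hab
  show X u v _ < 0
  rw [X_aff u v z1 z2 a b _ hab (by simp) (by simp)]
  simp only [Set.mem_setOf_eq] at hz1 hz2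
  rcases eq_or_lt_of_le ha with h | h
  · rw [← h]; have hb1 : b = 1 := by linarith
    rw [hb1]; ring_nf; linarith
  · nlinarith

end K23

/-- General position: no three of the points `v p` are collinear. -/
def GenPos {V : Type*} (v : V → ℝ × ℝ) : Prop :=
  ∀ p q r : V, p ≠ q → p ≠ r → q ≠ r → ¬ Collinear ℝ ({v p, v q, v r} : Set (ℝ × ℝ))

/-- An `h`-obstacle representation of a simple graph `G`: an injective drawing
`v` of the vertices in general position, together with `h` obstacles (nonempty
compact connected sets), each obstacle avoiding every closed edge segment and
every vertex point, such that every non-edge's open segment meets some obstacle. -/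
structure ObstacleRep {V : Type*} (G : SimpleGraph V) (h : ℕ) where
  v : V → ℝ × ℝ
  inj : Function.Injective v
  genpos : GenPos v
  obs : Fin h → Set (ℝ × ℝ)
  obs_compact : ∀ i, IsCompact (obs i)
  obs_connected : ∀ i, IsConnected (obs i)
  obs_avoid_edges : ∀ i, ∀ p q : V, G.Adj p q → Disjoint (obs i) (segment ℝ (v p) (v q))
  obs_avoid_vertices : ∀ i, ∀ p : V, v p ∉ obs i
  blocks : ∀ p q : V, p ≠ q → ¬ G.Adj p q →
    ∃ i, ((obs i) ∩ openSegment ℝ (v p) (v q)).Nonempty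

/-- `a` sees `b` to the left of `c`: the triple `(a, b, c)` is in clockwise order
(negative orientation). -/
def SeesLeft (a b c : ℝ × ℝ) : Prop :=
  (b.1 - a.1) * (c.2 - a.2) - (b.2 - a.2) * (c.1 - a.1) < 0

/-- in every 1-obstacle representation of a graph with an induced
`K_{2,3}`, the two parts of the `K_{2,3}` are linearly separable (their convex
hulls are disjoint), and each part induces the same sight ordering of the other. -/
theorem induced_K23_separable_same_sight_orderings
    {V : Type*} (G : SimpleGraph V) (x : Fin 2 → V) (y : Fin 3 → V)
    (hinj : Function.Injective (Sum.elim x y : Fin 2 ⊕ Fin 3 → V))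
    (hxy : ∀ i j, G.Adj (x i) (y j))
    (hxx : ∀ i i', ¬ G.Adj (x i) (x i'))
    (hyy : ∀ j j', ¬ G.Adj (y j) (y j'))
    (rep : ObstacleRep G 1) :
    Disjoint (convexHull ℝ (Set.range fun i => rep.v (x i)))
      (convexHull ℝ (Set.range fun j => rep.v (y j))) ∧
    (∀ i i' : Fin 2, ∀ j j' : Fin 3,
      (SeesLeft (rep.v (x i)) (rep.v (y j)) (rep.v (y j')) ↔
        SeesLeft (rep.v (x i')) (rep.v (y j)) (rep.v (y j')))) ∧
    (∀ j j' : Fin 3, ∀ i i' : Fin 2,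
      (SeesLeft (rep.v (y j)) (rep.v (x i)) (rep.v (x i')) ↔
        SeesLeft (rep.v (y j')) (rep.v (x i)) (rep.v (x i')))) := by
  classical
  set v := rep.v with hv
  have hSL : ∀ a b c : ℝ×ℝ, SeesLeft a b c ↔ K23.X a b c < 0 := fun _ _ _ => Iff.rfl
  -- distinctness of vertices
  have hxyne : ∀ (i : Fin 2) (j : Fin 3), x i ≠ y j := by
    intro i j h
    have := hinj (a₁ := Sum.inl i) (a₂ := Sum.inr j) (by simpa using h)
    simp at this
  have hyne : ∀ (j j' : Fin 3), j ≠ j' → y j ≠ y j' := by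
    intro j j' hne h
    have := hinj (a₁ := Sum.inr j) (a₂ := Sum.inr j') (by simpa using h)
    simp at this; exact hne this
  have hxne : x 0 ≠ x 1 := by
    intro h
    have := hinj (a₁ := Sum.inl 0) (a₂ := Sum.inl 1) (by simpa using h)
    simp at this
  -- noncollinearity
  have ncX : ∀ j : Fin 3, K23.X (v (x 0)) (v (x 1)) (v (y j)) ≠ 0 := by
    intro j h
    exact rep.genpos (x 0) (x 1) (y j) hxne (hxyne 0 j) (hxyne 1 j) (K23.collinear_of_X _ _ _ h)
  have ncY : ∀ (j j' : Fin 3) (i : Fin 2), j ≠ j' →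
      K23.X (v (y j)) (v (y j')) (v (x i)) ≠ 0 := by
    intro j j' i hne h
    exact rep.genpos (y j) (y j') (x i) (hyne j j' hne) (hxyne i j).symm (hxyne i j').symm
      (K23.collinear_of_X _ _ _ h)
  -- the obstacle
  have hO : IsPreconnected (rep.obs 0) := (rep.obs_connected 0).isPreconnected
  have hedge : ∀ (i : Fin 2) (j : Fin 3), ∀ z ∈ rep.obs 0, z ∉ segment ℝ (v (x i)) (v (y j)) :=
    fun i j => Set.disjoint_left.mp (rep.obs_avoid_edges 0 (x i) (y j) (hxy i j))
  have hblock : ∀ (p q : V), p ≠ q → ¬G.Adj p q →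
      ((rep.obs 0) ∩ openSegment ℝ (v p) (v q)).Nonempty := by
    intro p q hne hadj
    obtain ⟨i, hi⟩ := rep.blocks p q hne hadj
    rwa [Subsingleton.elim i 0] at hi
  have hcA : ((rep.obs 0) ∩ openSegment ℝ (v (x 0)) (v (x 1))).Nonempty :=
    hblock _ _ hxne (hxx 0 1)
  have hcB : ∀ (j j' : Fin 3), j ≠ j' →
      ((rep.obs 0) ∩ openSegment ℝ (v (y j)) (v (y j'))).Nonempty :=
    fun j j' h => hblock _ _ (hyne j j' h) (hyy j j')
  have third : ∀ j j' : Fin 3, j ≠ j' → ∃ m : Fin 3, j ≠ m ∧ j' ≠ m := by decide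
  -- the two sign-coherence facts
  have prodB : ∀ j j' : Fin 3, j ≠ j' →
      0 < K23.X (v (x 0)) (v (x 1)) (v (y j)) * K23.X (v (x 0)) (v (x 1)) (v (y j')) := by
    intro j j' hne
    obtain ⟨m, hm1, hm2⟩ := third j j' hne
    rcases (mul_ne_zero (ncX j) (ncX j')).lt_or_gt with h | h
    · exact absurd (K23.claim1 hO (v (x 0)) (v (x 1)) (v (y j)) (v (y j')) (v (y m))
        (hedge 0 j) (hedge 0 j') (hedge 0 m) (hedge 1 j) (hedge 1 j') (hedge 1 m)
        (ncX m) h hcA (hcB j m hm1) (hcB j' m hm2)) id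
    · exact h
  have prodA : ∀ j j' : Fin 3, j ≠ j' →
      0 < K23.X (v (y j)) (v (y j')) (v (x 0)) * K23.X (v (y j)) (v (y j')) (v (x 1)) := by
    intro j j' hne
    obtain ⟨m, hm1, hm2⟩ := third j j' hne
    rcases (mul_ne_zero (ncY j j' 0 hne) (ncY j j' 1 hne)).lt_or_gt with h | h
    · exact absurd (K23.claim2 hO (v (x 0)) (v (x 1)) (v (y j)) (v (y j')) (v (y m))
        (hedge 0 j) (hedge 0 j') (hedge 0 m) (hedge 1 j) (hedge 1 j') (hedge 1 m)
        (ncX j) (ncX j') (ncX m) h hcA (hcB j j' hne) (hcB j m hm1) (hcB j' m hm2)) id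
    · exact h
  refine ⟨?_, ?_, ?_⟩
  · -- the convex hulls are disjoint
    have hside : (∀ j : Fin 3, 0 < K23.X (v (x 0)) (v (x 1)) (v (y j))) ∨
        (∀ j : Fin 3, K23.X (v (x 0)) (v (x 1)) (v (y j)) < 0) := by
      rcases (ncX 0).lt_or_gt with h0 | h0
      · right; intro j
        rcases eq_or_ne j 0 with rfl | hj
        · exact h0
        · nlinarith [prodB 0 j (Ne.symm hj)]
      · left; intro j
        rcases eq_or_ne j 0 with rfl | hj
        · exact h0
        · nlinarith [prodB 0 j (Ne.symm hj)]
    have hsubA : convexHull ℝ (Set.range fun i => v (x i)) ⊆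
        {z : ℝ×ℝ | K23.X (v (x 0)) (v (x 1)) z = 0} := by
      apply convexHull_min ?_ (K23.convex_zero _ _)
      rintro _ ⟨i, rfl⟩
      have : i = 0 ∨ i = 1 := by omega
      rcases this with rfl | rfl
      · exact K23.X_uvu _ _
      · exact K23.X_uvv _ _
    rcases hside with hs | hs
    · have hsubB : convexHull ℝ (Set.range fun j => v (y j)) ⊆
          {z : ℝ×ℝ | 0 < K23.X (v (x 0)) (v (x 1)) z} := by
        apply convexHull_min ?_ (K23.convex_pos _ _)
        rintro _ ⟨j, rfl⟩
        exact hs j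
      apply Set.disjoint_left.mpr
      intro z hzA hzB
      have h1 := hsubA hzA
      have h2 := hsubB hzB
      simp only [Set.mem_setOf_eq] at h1 h2
      linarith
    · have hsubB : convexHull ℝ (Set.range fun j => v (y j)) ⊆
          {z : ℝ×ℝ | K23.X (v (x 0)) (v (x 1)) z < 0} := by
        apply convexHull_min ?_ (K23.convex_neg _ _)
        rintro _ ⟨j, rfl⟩
        exact hs j
      apply Set.disjoint_left.mpr
      intro z hzA hzB
      have h1 := hsubA hzA
      have h2 := hsubB hzB
      simp only [Set.mem_setOf_eq] at h1 h2
      linarith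
  · -- same sight ordering of the y's from the x's
    intro i i' j j'
    rcases eq_or_ne j j' with rfl | hjj
    · have h1 : K23.X (v (x i)) (v (y j)) (v (y j)) = 0 := K23.X_uvv _ _
      have h2 : K23.X (v (x i')) (v (y j)) (v (y j)) = 0 := K23.X_uvv _ _
      exact iff_of_false (by rw [hSL, h1]; exact lt_irrefl 0)
        (by rw [hSL, h2]; exact lt_irrefl 0)
    rcases eq_or_ne i i' with rfl | hii
    · exact Iff.rfl
    have hp := prodA j j' hjj
    have h1 : K23.X (v (x 0)) (v (y j)) (v (y j')) = K23.X (v (y j)) (v (y j')) (v (x 0)) :=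
      K23.X_cyc _ _ _
    have h2 : K23.X (v (x 1)) (v (y j)) (v (y j')) = K23.X (v (y j)) (v (y j')) (v (x 1)) :=
      K23.X_cyc _ _ _
    have hcases : (i = 0 ∧ i' = 1) ∨ (i = 1 ∧ i' = 0) := by omega
    rcases hcases with ⟨rfl, rfl⟩ | ⟨rfl, rfl⟩
    · rw [hSL, hSL, h1, h2]
      exact K23.opp_prod hp
    · rw [hSL, hSL, h1, h2]
      exact (K23.opp_prod hp).symm
  · -- same sight ordering of the x's from the y's
    intro j j' i i'
    rcases eq_or_ne i i' with rfl | hii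
    · have h1 : K23.X (v (y j)) (v (x i)) (v (x i)) = 0 := K23.X_uvv _ _
      have h2 : K23.X (v (y j')) (v (x i)) (v (x i)) = 0 := K23.X_uvv _ _
      exact iff_of_false (by rw [hSL, h1]; exact lt_irrefl 0)
        (by rw [hSL, h2]; exact lt_irrefl 0)
    rcases eq_or_ne j j' with rfl | hjj
    · exact Iff.rfl
    have hp := prodB j j' hjj
    have hcases : (i = 0 ∧ i' = 1) ∨ (i = 1 ∧ i' = 0) := by omega
    rcases hcases with ⟨rfl, rfl⟩ | ⟨rfl, rfl⟩
    · -- (i, i') = (0, 1)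
      have h1 : K23.X (v (y j)) (v (x 0)) (v (x 1)) = K23.X (v (x 0)) (v (x 1)) (v (y j)) :=
        K23.X_cyc _ _ _
      have h2 : K23.X (v (y j')) (v (x 0)) (v (x 1)) = K23.X (v (x 0)) (v (x 1)) (v (y j')) :=
        K23.X_cyc _ _ _
      rw [hSL, hSL, h1, h2]
      exact K23.opp_prod hp
    · -- (i, i') = (1, 0)
      have h1 : K23.X (v (y j)) (v (x 1)) (v (x 0)) = -K23.X (v (x 0)) (v (x 1)) (v (y j)) :=
        (K23.X_cyc _ _ _).trans (K23.X_swap12 _ _ _)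
      have h2 : K23.X (v (y j')) (v (x 1)) (v (x 0)) = -K23.X (v (x 0)) (v (x 1)) (v (y j')) :=
        (K23.X_cyc _ _ _).trans (K23.X_swap12 _ _ _)
      rw [hSL, hSL, h1, h2, neg_lt_zero, neg_lt_zero]
      exact K23.opp_prod' hp
end

section
/- In every 1-obstacle representation v of K*_{5,5}, for all indices i, j, k, l ∈ {1,…,5} with i, j, k, l pairwise distinct (so that {b_i, b_j, r_k, r_l} induces a K_{2,2}), the four points v(b_i), v(b_j), v(r_k), v(r_l) are in convex position and the two points v(b_i), v(b_j) appear consecutively on the boundary of their convex hull (both color classes are contiguous around the hull); equivalently, either the open segments joining v(b_i) to v(r_k) and v(b_j) to v(r_l) cross, or the open segments joining v(b_i) to v(r_l) and v(b_j) to v(r_k) cross, so the drawing of the induced K_{2,2} is a self-intersecting 'bowtie'. -/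
open Set

noncomputable def sig (a b c : ℝ × ℝ) : ℝ :=
  (b.1 - a.1) * (c.2 - a.2) - (b.2 - a.2) * (c.1 - a.1)

lemma sig_cyc (a b c : ℝ × ℝ) : sig a b c = sig b c a := by simp only [sig]; ring

lemma sig_swap (a b c : ℝ × ℝ) : sig a c b = -sig a b c := by simp only [sig]; ring

lemma sig_swap12 (a b c : ℝ × ℝ) : sig b a c = -sig a b c := by simp only [sig]; ring

lemma sig_self1 (a b : ℝ × ℝ) : sig a a b = 0 := by simp only [sig]; ring

lemma sig_self2 (a b : ℝ × ℝ) : sig a b a = 0 := by simp only [sig]; ring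

lemma sig_self3 (a b : ℝ × ℝ) : sig a b b = 0 := by simp only [sig]; ring

lemma sig_combo2 (x y u v : ℝ × ℝ) (s t : ℝ) (h : s + t = 1) :
    sig x y (s • u + t • v) = s * sig x y u + t * sig x y v := by
  obtain ⟨u1, u2⟩ := u; obtain ⟨v1, v2⟩ := v
  have ht : t = 1 - s := by linarith
  subst ht
  simp only [sig, Prod.smul_mk, smul_eq_mul, Prod.mk_add_mk]
  ring

lemma sig_combo3 (x y a b c : ℝ × ℝ) (α β γ : ℝ) (h : α + β + γ = 1) :
    sig x y (α • a + β • b + γ • c) = α * sig x y a + β * sig x y b + γ * sig x y c := by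
  obtain ⟨a1, a2⟩ := a; obtain ⟨b1, b2⟩ := b; obtain ⟨c1, c2⟩ := c
  have hγ : γ = 1 - α - β := by linarith
  subst hγ
  simp only [sig, Prod.smul_mk, smul_eq_mul, Prod.mk_add_mk]
  ring

lemma sig_combo4 (x y a b c d : ℝ × ℝ) (α β γ δ : ℝ) (h : α + β + γ + δ = 1) :
    sig x y (α • a + β • b + γ • c + δ • d) =
      α * sig x y a + β * sig x y b + γ * sig x y c + δ * sig x y d := by
  obtain ⟨a1, a2⟩ := a; obtain ⟨b1, b2⟩ := b; obtain ⟨c1, c2⟩ := c; obtain ⟨d1, d2⟩ := d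
  have hδ : δ = 1 - α - β - γ := by linarith
  subst hδ
  simp only [sig, Prod.smul_mk, smul_eq_mul, Prod.mk_add_mk]
  ring

lemma bary (a b c w : ℝ × ℝ) :
    (sig w b c) • a + (sig a w c) • b + (sig a b w) • c = (sig a b c) • w := by
  obtain ⟨a1, a2⟩ := a; obtain ⟨b1, b2⟩ := b; obtain ⟨c1, c2⟩ := c; obtain ⟨w1, w2⟩ := w
  simp only [sig, Prod.smul_mk, smul_eq_mul, Prod.mk_add_mk, Prod.mk.injEq]
  constructor <;> ring

lemma sig_sum (a b c w : ℝ × ℝ) : sig w b c + sig a w c + sig a b w = sig a b c := by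
  simp only [sig]; ring

lemma continuous_sig3 (a b : ℝ × ℝ) : Continuous (fun w : ℝ × ℝ => sig a b w) := by
  simp only [sig]; fun_prop

lemma continuous_sig1 (b c : ℝ × ℝ) : Continuous (fun w : ℝ × ℝ => sig w b c) := by
  simp only [sig]; fun_prop

lemma continuous_sig2 (a c : ℝ × ℝ) : Continuous (fun w : ℝ × ℝ => sig a w c) := by
  simp only [sig]; fun_prop


lemma mem_tri (a b c : ℝ × ℝ) {α β γ : ℝ} (hα : 0 ≤ α) (hβ : 0 ≤ β) (hγ : 0 ≤ γ)
    (h : α + β + γ = 1) : α • a + β • b + γ • c ∈ convexHull ℝ ({a, b, c} : Set (ℝ × ℝ)) := by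
  have ha : a ∈ convexHull ℝ ({a, b, c} : Set (ℝ × ℝ)) := subset_convexHull ℝ _ (by simp)
  have hb : b ∈ convexHull ℝ ({a, b, c} : Set (ℝ × ℝ)) := subset_convexHull ℝ _ (by simp)
  have hc : c ∈ convexHull ℝ ({a, b, c} : Set (ℝ × ℝ)) := subset_convexHull ℝ _ (by simp)
  by_cases h0 : β + γ = 0
  · have hβ0 : β = 0 := by linarith
    have hγ0 : γ = 0 := by linarith
    have hα1 : α = 1 := by linarith
    subst hβ0 hγ0 hα1
    simpa using ha
  · have hpos : 0 < β + γ := lt_of_le_of_ne (add_nonneg hβ hγ) (Ne.symm h0)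
    have hu : (β / (β + γ)) • b + (γ / (β + γ)) • c ∈ convexHull ℝ ({a, b, c} : Set (ℝ × ℝ)) :=
      (convex_convexHull ℝ _) hb hc (div_nonneg hβ hpos.le) (div_nonneg hγ hpos.le)
        (by field_simp)
    have := (convex_convexHull ℝ ({a, b, c} : Set (ℝ × ℝ))) ha hu hα hpos.le (by linarith)
    have heq : α • a + (β + γ) • ((β / (β + γ)) • b + (γ / (β + γ)) • c)
        = α • a + β • b + γ • c := by
      rw [smul_add, smul_smul, smul_smul]
      rw [show (β + γ) * (β / (β + γ)) = β by field_simp]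
      rw [show (β + γ) * (γ / (β + γ)) = γ by field_simp]
      rw [add_assoc]
    rwa [heq] at this

lemma tri_coords {a b c w : ℝ × ℝ} (hw : w ∈ convexHull ℝ ({a, b, c} : Set (ℝ × ℝ))) :
    ∃ α β γ : ℝ, 0 ≤ α ∧ 0 ≤ β ∧ 0 ≤ γ ∧ α + β + γ = 1 ∧ w = α • a + β • b + γ • c := by
  rw [convexHull_insert (⟨b, by simp⟩ : ({b, c} : Set (ℝ × ℝ)).Nonempty), convexHull_pair,
    mem_convexJoin] at hw
  obtain ⟨x, hx, z, hz, hwz⟩ := hw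
  rw [Set.mem_singleton_iff] at hx
  subst hx
  obtain ⟨s, t, hs, ht, hst, rfl⟩ := hz
  obtain ⟨u, v, hu, hv, huv, rfl⟩ := hwz
  refine ⟨u, v * s, v * t, hu, mul_nonneg hv hs, mul_nonneg hv ht, by nlinarith, ?_⟩
  rw [smul_add, smul_smul, smul_smul, add_assoc]

lemma quad_coords {a b c d w : ℝ × ℝ} (hw : w ∈ convexHull ℝ ({a, b, c, d} : Set (ℝ × ℝ))) :
    ∃ α β γ δ : ℝ, 0 ≤ α ∧ 0 ≤ β ∧ 0 ≤ γ ∧ 0 ≤ δ ∧ α + β + γ + δ = 1 ∧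
      w = α • a + β • b + γ • c + δ • d := by
  rw [convexHull_insert (⟨b, by simp⟩ : ({b, c, d} : Set (ℝ × ℝ)).Nonempty),
    mem_convexJoin] at hw
  obtain ⟨x, hx, z, hz, hwz⟩ := hw
  rw [Set.mem_singleton_iff] at hx
  subst hx
  obtain ⟨β', γ', δ', hβ', hγ', hδ', hsum, rfl⟩ := tri_coords hz
  obtain ⟨u, v, hu, hv, huv, rfl⟩ := hwz
  refine ⟨u, v * β', v * γ', v * δ', hu, mul_nonneg hv hβ', mul_nonneg hv hγ',
    mul_nonneg hv hδ', by nlinarith, ?_⟩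
  rw [smul_add, smul_add, smul_smul, smul_smul, smul_smul, add_assoc, add_assoc, add_assoc]

lemma convex_sig_le (a b : ℝ × ℝ) (r : ℝ) : Convex ℝ {w : ℝ × ℝ | sig a b w ≤ r} := by
  intro x hx y hy s t hs ht hst
  simp only [Set.mem_setOf_eq] at *
  rw [sig_combo2 a b x y s t hst]
  have h1 : s * sig a b x ≤ s * r := mul_le_mul_of_nonneg_left hx hs
  have h2 : t * sig a b y ≤ t * r := mul_le_mul_of_nonneg_left hy ht
  have hr : s * r + t * r = r := by rw [← add_mul, hst, one_mul]
  linarith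

lemma interior_tri {a b c w : ℝ × ℝ} (he : 0 < sig a b c) (h1 : 0 < sig w b c)
    (h2 : 0 < sig a w c) (h3 : 0 < sig a b w) :
    w ∈ interior (convexHull ℝ ({a, b, c} : Set (ℝ × ℝ))) := by
  have hVopen : IsOpen {u : ℝ × ℝ | 0 < sig u b c ∧ 0 < sig a u c ∧ 0 < sig a b u} := by
    have hset : {u : ℝ × ℝ | 0 < sig u b c ∧ 0 < sig a u c ∧ 0 < sig a b u} =
        {u : ℝ × ℝ | 0 < sig u b c} ∩ ({u : ℝ × ℝ | 0 < sig a u c} ∩ {u : ℝ × ℝ | 0 < sig a b u}) := by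
      ext u; simp [Set.mem_setOf_eq, Set.mem_inter_iff, and_assoc]
    rw [hset]
    exact (isOpen_lt continuous_const (continuous_sig1 b c)).inter
      ((isOpen_lt continuous_const (continuous_sig2 a c)).inter
        (isOpen_lt continuous_const (continuous_sig3 a b)))
  refine mem_interior.2 ⟨_, ?_, hVopen, ⟨h1, h2, h3⟩⟩
  rintro u ⟨hu1, hu2, hu3⟩
  have hrep : u = (sig u b c / sig a b c) • a + (sig a u c / sig a b c) • b +
      (sig a b u / sig a b c) • c := by
    have h := bary a b c u
    calc u = (sig a b c)⁻¹ • ((sig a b c) • u) := (inv_smul_smul₀ he.ne' u).symm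
      _ = (sig a b c)⁻¹ • ((sig u b c) • a + (sig a u c) • b + (sig a b u) • c) := by rw [h]
      _ = _ := by
          rw [smul_add, smul_add, smul_smul, smul_smul, smul_smul]
          simp only [div_eq_inv_mul]
  rw [hrep]
  exact mem_tri a b c (le_of_lt (div_pos hu1 he)) (le_of_lt (div_pos hu2 he))
    (le_of_lt (div_pos hu3 he))
    (by rw [← add_div, ← add_div, sig_sum, div_self he.ne'])


/-- reconstruction of a point from positive barycentric data -/
lemma recon {a b c w : ℝ × ℝ} (he : sig a b c ≠ 0) :
    w = (sig w b c / sig a b c) • a + (sig a w c / sig a b c) • b +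
      (sig a b w / sig a b c) • c := by
  have h := bary a b c w
  calc w = (sig a b c)⁻¹ • ((sig a b c) • w) := (inv_smul_smul₀ he w).symm
    _ = (sig a b c)⁻¹ • ((sig w b c) • a + (sig a w c) • b + (sig a b w) • c) := by rw [h]
    _ = _ := by
        rw [smul_add, smul_add, smul_smul, smul_smul, smul_smul]
        simp only [div_eq_inv_mul]

/-- coefficients sum for reconstruction -/
lemma recon_sum {a b c w : ℝ × ℝ} (he : sig a b c ≠ 0) :
    sig w b c / sig a b c + sig a w c / sig a b c + sig a b w / sig a b c = 1 := by
  rw [← add_div, ← add_div, sig_sum, div_self he]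

/-- a point of the triangle is interior or on one of the three closed edges -/
lemma tri_cases {a b c w : ℝ × ℝ} (he : 0 < sig a b c)
    (hw : w ∈ convexHull ℝ ({a, b, c} : Set (ℝ × ℝ))) :
    w ∈ interior (convexHull ℝ ({a, b, c} : Set (ℝ × ℝ))) ∨
      w ∈ segment ℝ a b ∨ w ∈ segment ℝ b c ∨ w ∈ segment ℝ a c := by
  obtain ⟨α, β, γ, hα, hβ, hγ, hsum, rfl⟩ := tri_coords hw
  have h1 : sig (α • a + β • b + γ • c) b c = α * sig a b c := by
    rw [sig_cyc, sig_combo3 _ _ _ _ _ _ _ _ hsum]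
    rw [show sig b c a = sig a b c from (sig_cyc a b c).symm]
    rw [show sig b c b = 0 from sig_self2 b c, show sig b c c = 0 from sig_self3 b c]; ring
  have h2 : sig a (α • a + β • b + γ • c) c = β * sig a b c := by
    rw [show sig a (α • a + β • b + γ • c) c = sig c a (α • a + β • b + γ • c) from
      by rw [sig_cyc a _ c, sig_cyc]]
    rw [sig_combo3 _ _ _ _ _ _ _ _ hsum]
    rw [show sig c a a = 0 from sig_self3 c a, show sig c a b = sig a b c from sig_cyc c a b, show sig c a c = 0 from sig_self2 c a]
    ring
  have h3 : sig a b (α • a + β • b + γ • c) = γ * sig a b c := by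
    rw [sig_combo3 _ _ _ _ _ _ _ _ hsum, sig_self2, sig_self3]; ring
  rcases eq_or_lt_of_le hα with hα0 | hαpos
  · right; right; left
    refine ⟨β, γ, hβ, hγ, by linarith, ?_⟩
    rw [← hα0]; simp
  rcases eq_or_lt_of_le hβ with hβ0 | hβpos
  · right; right; right
    refine ⟨α, γ, hα, hγ, by linarith, ?_⟩
    rw [← hβ0]; simp
  rcases eq_or_lt_of_le hγ with hγ0 | hγpos
  · right; left
    refine ⟨α, β, hα, hβ, by linarith, ?_⟩
    rw [← hγ0]; simp
  · left
    exact interior_tri he (by rw [h1]; positivity) (by rw [h2]; positivity)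
      (by rw [h3]; positivity)


lemma sig_cyc' (a b c : ℝ × ℝ) : sig a b c = sig c a b :=
  (sig_cyc a b c).trans (sig_cyc b c a)

section Split
variable {A B C D w : ℝ × ℝ}

/-- compute `sig B C w`, `sig C A w`, `sig A B w`, `sig B D w`, `sig D A w` for
`w = α•A+β•B+γ•C+δ•D` -/
lemma quad_sigs {α β γ δ : ℝ} (hsum : α + β + γ + δ = 1)
    (hw : w = α • A + β • B + γ • C + δ • D) :
    sig w B C = α * sig A B C + δ * sig B C D ∧
    sig A w C = β * sig A B C - δ * sig A C D ∧
    sig A B w = γ * sig A B C + δ * sig A B D ∧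
    sig w B D = α * sig A B D - γ * sig B C D ∧
    sig A w D = β * sig A B D + γ * sig A C D := by
  refine ⟨?_, ?_, ?_, ?_, ?_⟩
  · rw [show sig w B C = sig B C w from sig_cyc w B C, hw,
      sig_combo4 _ _ _ _ _ _ _ _ _ _ hsum,
      show sig B C A = sig A B C from (sig_cyc A B C).symm, sig_self2, sig_self3,
      show sig B C D = sig B C D from rfl]
    ring
  · rw [show sig A w C = sig C A w from sig_cyc' A w C, hw,
      sig_combo4 _ _ _ _ _ _ _ _ _ _ hsum, sig_self3,
      show sig C A B = sig A B C from sig_cyc C A B, sig_self2,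
      show sig C A D = -sig A C D from by
        rw [show sig C A D = sig A D C from sig_cyc C A D, sig_swap]]
    ring
  · rw [hw, sig_combo4 _ _ _ _ _ _ _ _ _ _ hsum, sig_self2, sig_self3]
    ring
  · rw [show sig w B D = sig B D w from sig_cyc w B D, hw,
      sig_combo4 _ _ _ _ _ _ _ _ _ _ hsum,
      show sig B D A = sig A B D from (sig_cyc A B D).symm, sig_self2, sig_self3,
      show sig B D C = -sig B C D from sig_swap B C D]
    ring
  · rw [show sig A w D = sig D A w from sig_cyc' A w D, hw,
      sig_combo4 _ _ _ _ _ _ _ _ _ _ hsum, sig_self3,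
      show sig D A B = sig A B D from sig_cyc D A B, sig_self2,
      show sig D A C = sig A C D from sig_cyc D A C]
    ring

lemma split_pos (he1 : 0 < sig A B C) (he2 : sig A B D < 0) (he3 : sig A C D < 0)
    (he4 : 0 < sig B C D) (hw : w ∈ convexHull ℝ ({A, B, C, D} : Set (ℝ × ℝ)))
    (hside : 0 ≤ sig A B w) :
    ∃ x y z : ℝ, 0 ≤ x ∧ 0 ≤ y ∧ 0 ≤ z ∧ x + y + z = 1 ∧ w = x • A + y • B + z • C ∧
      sig A B w = z * sig A B C := by
  obtain ⟨α, β, γ, δ, hα, hβ, hγ, hδ, hsum, hrep⟩ := quad_coords hw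
  obtain ⟨s1, s2, _s3, _s4, _s5⟩ := quad_sigs hsum hrep
  refine ⟨sig w B C / sig A B C, sig A w C / sig A B C, sig A B w / sig A B C,
    ?_, ?_, div_nonneg hside he1.le, recon_sum he1.ne', recon he1.ne', ?_⟩
  · rw [s1]; positivity
  · rw [s2]
    have : 0 ≤ β * sig A B C - δ * sig A C D := by nlinarith
    positivity
  · field_simp

lemma split_neg (he1 : 0 < sig A B C) (he2 : sig A B D < 0) (he3 : sig A C D < 0)
    (he4 : 0 < sig B C D) (hw : w ∈ convexHull ℝ ({A, B, C, D} : Set (ℝ × ℝ)))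
    (hside : sig A B w ≤ 0) :
    ∃ x y z : ℝ, 0 ≤ x ∧ 0 ≤ y ∧ 0 ≤ z ∧ x + y + z = 1 ∧ w = x • A + y • B + z • D ∧
      sig A B w = z * sig A B D := by
  obtain ⟨α, β, γ, δ, hα, hβ, hγ, hδ, hsum, hrep⟩ := quad_coords hw
  obtain ⟨_s1, _s2, _s3, s4, s5⟩ := quad_sigs hsum hrep
  have he2' : sig A B D ≠ 0 := he2.ne
  refine ⟨sig w B D / sig A B D, sig A w D / sig A B D, sig A B w / sig A B D,
    ?_, ?_, ?_, recon_sum he2', recon he2', ?_⟩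
  · rw [s4, show (α * sig A B D - γ * sig B C D) / sig A B D =
      (-(α * sig A B D - γ * sig B C D)) / (-(sig A B D)) from (neg_div_neg_eq _ _).symm]
    apply div_nonneg _ (by linarith)
    nlinarith
  · rw [s5, show (β * sig A B D + γ * sig A C D) / sig A B D =
      (-(β * sig A B D + γ * sig A C D)) / (-(sig A B D)) from (neg_div_neg_eq _ _).symm]
    apply div_nonneg _ (by linarith)
    nlinarith
  · rw [show sig A B w / sig A B D = (-(sig A B w)) / (-(sig A B D)) from
      (neg_div_neg_eq _ _).symm]
    exact div_nonneg (by linarith) (by linarith)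
  · field_simp

end Split


/-- mem of a triangle hull from sig data (all same sign as base) -/
lemma mem_tri_sig {a b c u : ℝ × ℝ} (he : 0 < sig a b c) (h1 : 0 ≤ sig u b c)
    (h2 : 0 ≤ sig a u c) (h3 : 0 ≤ sig a b u) :
    u ∈ convexHull ℝ ({a, b, c} : Set (ℝ × ℝ)) := by
  have hrep := recon (a := a) (b := b) (c := c) (w := u) he.ne'
  rw [hrep]
  exact mem_tri a b c (div_nonneg h1 he.le) (div_nonneg h2 he.le) (div_nonneg h3 he.le)
    (recon_sum he.ne')

/-- any point of the open diagonal AB lies in the interior of the quad hull,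
provided C and D are strictly on opposite sides of line AB. -/
lemma diag_interior {A B C D z : ℝ × ℝ} (he1 : 0 < sig A B C) (he2 : sig A B D < 0)
    (hz : z ∈ openSegment ℝ A B) :
    z ∈ interior (convexHull ℝ ({A, B, C, D} : Set (ℝ × ℝ))) := by
  obtain ⟨s, t, hs, ht, hst, rfl⟩ := hz
  have hVopen : IsOpen {u : ℝ × ℝ | 0 < sig u B C ∧ 0 < sig A u C ∧ 0 < sig u A D ∧
      0 < sig B u D} := by
    have hset : {u : ℝ × ℝ | 0 < sig u B C ∧ 0 < sig A u C ∧ 0 < sig u A D ∧ 0 < sig B u D} =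
        {u : ℝ × ℝ | 0 < sig u B C} ∩ ({u : ℝ × ℝ | 0 < sig A u C} ∩
          ({u : ℝ × ℝ | 0 < sig u A D} ∩ {u : ℝ × ℝ | 0 < sig B u D})) := by
      ext u; simp [Set.mem_setOf_eq, Set.mem_inter_iff, and_assoc]
    rw [hset]
    exact (isOpen_lt continuous_const (continuous_sig1 B C)).inter
      ((isOpen_lt continuous_const (continuous_sig2 A C)).inter
        (((isOpen_lt continuous_const (continuous_sig1 A D))).inter
          (isOpen_lt continuous_const (continuous_sig2 B D))))
  refine mem_interior.2 ⟨_, ?_, hVopen, ?_, ?_, ?_, ?_⟩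
  · -- V ⊆ hull
    rintro u ⟨hu1, hu2, hu3, hu4⟩
    rcases le_or_gt (sig A B u) 0 with h | h
    · have hBAD : 0 < sig B A D := by rw [sig_swap12]; linarith
      have m1 : 0 ≤ sig u A D := hu3.le
      have m2 : 0 ≤ sig B u D := hu4.le
      have m3 : 0 ≤ sig B A u := by rw [sig_swap12]; linarith
      have := mem_tri_sig hBAD m1 m2 m3
      refine convexHull_mono ?_ this
      intro x hx; simp only [Set.mem_insert_iff, Set.mem_singleton_iff] at hx ⊢; tauto
    · have := mem_tri_sig he1 hu1.le hu2.le h.le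
      refine convexHull_mono ?_ this
      intro x hx; simp only [Set.mem_insert_iff, Set.mem_singleton_iff] at hx ⊢; tauto
  · rw [show sig (s • A + t • B) B C = sig B C (s • A + t • B) from sig_cyc _ B C,
      sig_combo2 _ _ _ _ _ _ hst, show sig B C A = sig A B C from (sig_cyc A B C).symm,
      sig_self2]
    nlinarith
  · rw [show sig A (s • A + t • B) C = sig C A (s • A + t • B) from sig_cyc' A _ C,
      sig_combo2 _ _ _ _ _ _ hst, sig_self3,
      show sig C A B = sig A B C from sig_cyc C A B]
    nlinarith
  · rw [show sig (s • A + t • B) A D = sig A D (s • A + t • B) from sig_cyc _ A D,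
      sig_combo2 _ _ _ _ _ _ hst, sig_self2,
      show sig A D B = -sig A B D from sig_swap A B D]
    nlinarith
  · rw [show sig B (s • A + t • B) D = sig D B (s • A + t • B) from sig_cyc' B _ D,
      sig_combo2 _ _ _ _ _ _ hst, sig_self3,
      show sig D B A = -sig A B D from by
        rw [show sig D B A = sig B A D from sig_cyc D B A, sig_swap12]]
    nlinarith

/-- If two opposite-signs conditions hold, the open segments cross. -/
lemma cross_of_sig {a b c d : ℝ × ℝ} (h1 : sig a b c * sig a b d < 0)
    (h2 : sig c d a * sig c d b < 0) :
    ∃ x : ℝ × ℝ, x ∈ openSegment ℝ a b ∧ x ∈ openSegment ℝ c d := by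
  have hcd : c ≠ d := by
    rintro rfl; rw [sig_self1, zero_mul] at h2; exact lt_irrefl 0 h2
  set p := sig c d a with hp
  set q := sig c d b with hq
  have hpq : p - q ≠ 0 := by
    rcases mul_neg_iff.1 h2 with ⟨h3, h4⟩ | ⟨h3, h4⟩ <;> intro h <;> nlinarith
  set t := p / (p - q) with htdef
  have ht0 : 0 < t ∧ t < 1 := by
    rcases mul_neg_iff.1 h2 with ⟨h3, h4⟩ | ⟨h3, h4⟩
    · constructor
      · exact div_pos h3 (by linarith)
      · rw [div_lt_one (by linarith)]; linarith
    · constructor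
      · rw [htdef, show p / (p - q) = (-p) / (-(p - q)) from (neg_div_neg_eq _ _).symm]
        exact div_pos (by linarith) (by linarith)
      · rw [htdef, show p / (p - q) = (-p) / (-(p - q)) from (neg_div_neg_eq _ _).symm,
          div_lt_one (by linarith)]
        linarith
  set x := (1 - t) • a + t • b with hxdef
  have hxab : x ∈ openSegment ℝ a b := ⟨1 - t, t, by linarith [ht0.2], ht0.1, by ring, rfl⟩
  have hcdx : sig c d x = 0 := by
    rw [hxdef, sig_combo2 _ _ _ _ _ _ (by ring), ← hp, ← hq, htdef]
    field_simp
    ring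
  -- write x as affine combination of c, d
  have hxcd : ∃ u : ℝ, x = (1 - u) • c + u • d := by
    by_cases hd1 : d.1 - c.1 = 0
    · have hd2 : d.2 - c.2 ≠ 0 := by
        intro h
        apply hcd
        exact Prod.ext (by linarith) (by linarith)
      refine ⟨(x.2 - c.2) / (d.2 - c.2), ?_⟩
      have hx1 : x.1 = c.1 := by
        simp only [sig] at hcdx
        have h0 : (d.1 - c.1) * (x.2 - c.2) = 0 := mul_eq_zero_of_left hd1 _
        have : (d.2 - c.2) * (x.1 - c.1) = 0 := by linarith
        rcases mul_eq_zero.1 this with h | h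
        · exact absurd h hd2
        · linarith
      apply Prod.ext
      · simp only [Prod.fst_add, Prod.smul_fst, smul_eq_mul]
        have : d.1 = c.1 := by linarith
        rw [this, hx1]; ring
      · simp only [Prod.snd_add, Prod.smul_snd, smul_eq_mul]
        field_simp
        ring
    · refine ⟨(x.1 - c.1) / (d.1 - c.1), ?_⟩
      apply Prod.ext
      · simp only [Prod.fst_add, Prod.smul_fst, smul_eq_mul]
        field_simp
        ring
      · simp only [Prod.snd_add, Prod.smul_snd, smul_eq_mul]
        simp only [sig] at hcdx
        field_simp
        nlinarith [hcdx]
  obtain ⟨u, hu⟩ := hxcd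
  have habx : sig a b x = 0 := by
    rw [hxdef, sig_combo2 _ _ _ _ _ _ (by ring), sig_self2, sig_self3]; ring
  have habx' : (1 - u) * sig a b c + u * sig a b d = 0 := by
    rw [← sig_combo2 a b c d _ _ (by ring), ← hu, habx]
  have hu01 : 0 < u ∧ u < 1 := by
    rcases mul_neg_iff.1 h1 with ⟨h3, h4⟩ | ⟨h3, h4⟩
    · constructor <;> nlinarith
    · constructor <;> nlinarith
  exact ⟨x, hxab, ⟨1 - u, u, by linarith [hu01.2], hu01.1, by ring, hu.symm⟩⟩



/-- In the convex-alternating configuration, the obstacle stays inside the quad. -/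
lemma obstacle_in_quad {A B C D : ℝ × ℝ} {O : Set (ℝ × ℝ)} (hO : IsPreconnected O)
    (he1 : 0 < sig A B C) (he2 : sig A B D < 0) (he3 : sig A C D < 0) (he4 : 0 < sig B C D)
    (avAC : ∀ x ∈ O, x ∉ segment ℝ A C) (avBC : ∀ x ∈ O, x ∉ segment ℝ B C)
    (avBD : ∀ x ∈ O, x ∉ segment ℝ B D) (avAD : ∀ x ∈ O, x ∉ segment ℝ A D)
    (hblock : (O ∩ openSegment ℝ A B).Nonempty) :
    O ⊆ convexHull ℝ ({A, B, C, D} : Set (ℝ × ℝ)) := by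
  set Q := convexHull ℝ ({A, B, C, D} : Set (ℝ × ℝ)) with hQ
  have hQclosed : IsClosed Q := (Set.toFinite _).isClosed_convexHull (𝕜 := ℝ)
  have key : ∀ o ∈ O, o ∈ Q → o ∈ interior Q := by
    intro o hoO hoQ
    rcases le_or_gt (sig A B o) 0 with hside | hside
    · obtain ⟨x, y, z, hx, hy, hz, hsum, hrep, hsig⟩ := split_neg he1 he2 he3 he4 hoQ hside
      rcases eq_or_lt_of_le hx with hx0 | hxpos
      · exact absurd (show o ∈ segment ℝ B D from
          ⟨y, z, hy, hz, by linarith, by rw [hrep, ← hx0]; simp⟩) (avBD o hoO)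
      rcases eq_or_lt_of_le hy with hy0 | hypos
      · exact absurd (show o ∈ segment ℝ A D from
          ⟨x, z, hx, hz, by linarith, by rw [hrep, ← hy0]; simp⟩) (avAD o hoO)
      rcases eq_or_lt_of_le hz with hz0 | hzpos
      · have hoseg : o ∈ openSegment ℝ A B :=
          ⟨x, y, hxpos, hypos, by linarith, by rw [hrep, ← hz0]; simp⟩
        exact diag_interior he1 he2 hoseg
      · -- interior of triangle B A D
        have hBAD : 0 < sig B A D := by rw [sig_swap12]; linarith
        have c1 : 0 < sig o A D := by
          rw [show sig o A D = sig A D o from sig_cyc o A D, hrep,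
            sig_combo3 _ _ _ _ _ _ _ _ hsum, sig_self2, sig_self3,
            show sig A D B = -sig A B D from sig_swap A B D]
          nlinarith
        have c2 : 0 < sig B o D := by
          rw [show sig B o D = sig D B o from sig_cyc' B o D, hrep,
            sig_combo3 _ _ _ _ _ _ _ _ hsum, sig_self2, sig_self3,
            show sig D B A = -sig A B D from by
              rw [show sig D B A = sig B A D from sig_cyc D B A, sig_swap12]]
          nlinarith
        have c3 : 0 < sig B A o := by rw [sig_swap12]; nlinarith
        have := interior_tri hBAD c1 c2 c3
        refine interior_mono (convexHull_mono ?_) this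
        intro x hx; simp only [Set.mem_insert_iff, Set.mem_singleton_iff] at hx ⊢; tauto
    · obtain ⟨x, y, z, hx, hy, hz, hsum, hrep, hsig⟩ := split_pos he1 he2 he3 he4 hoQ hside.le
      rcases eq_or_lt_of_le hx with hx0 | hxpos
      · exact absurd (show o ∈ segment ℝ B C from
          ⟨y, z, hy, hz, by linarith, by rw [hrep, ← hx0]; simp⟩) (avBC o hoO)
      rcases eq_or_lt_of_le hy with hy0 | hypos
      · exact absurd (show o ∈ segment ℝ A C from
          ⟨x, z, hx, hz, by linarith, by rw [hrep, ← hy0]; simp⟩) (avAC o hoO)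
      have hzpos : 0 < z := by nlinarith
      have c1 : 0 < sig o B C := by
        rw [show sig o B C = sig B C o from sig_cyc o B C, hrep,
          sig_combo3 _ _ _ _ _ _ _ _ hsum, sig_self2, sig_self3,
          show sig B C A = sig A B C from (sig_cyc A B C).symm]
        nlinarith
      have c2 : 0 < sig A o C := by
        rw [show sig A o C = sig C A o from sig_cyc' A o C, hrep,
          sig_combo3 _ _ _ _ _ _ _ _ hsum, sig_self2, sig_self3,
          show sig C A B = sig A B C from sig_cyc C A B]
        nlinarith
      have c3 : 0 < sig A B o := hside
      have := interior_tri he1 c1 c2 c3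
      refine interior_mono (convexHull_mono ?_) this
      intro x hx; simp only [Set.mem_insert_iff, Set.mem_singleton_iff] at hx ⊢; tauto
  obtain ⟨Y, hYO, hYseg⟩ := hblock
  have hYint : Y ∈ interior Q := diag_interior he1 he2 hYseg
  have hcover : O ⊆ interior Q ∪ Qᶜ := fun o ho =>
    (em (o ∈ Q)).elim (fun h => Or.inl (key o ho h)) Or.inr
  have hdisj : Disjoint (interior Q) Qᶜ :=
    Set.disjoint_left.2 fun x hx hxc => hxc (interior_subset hx)
  rcases hO.subset_or_subset isOpen_interior hQclosed.isOpen_compl hdisj hcover with h | h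
  · exact h.trans interior_subset
  · exact absurd (interior_subset hYint) (h hYO)

/-- The concave configuration (p strictly inside triangle abc) is impossible:
a connected obstacle cannot block both `ab` and `cp` while avoiding the four
segments `ac`, `bc`, `ap`, `bp`. -/
lemma no_concave {a b c p : ℝ × ℝ} {O : Set (ℝ × ℝ)} (hO : IsPreconnected O)
    (he : 0 < sig a b c) (h1 : 0 < sig p b c) (h2 : 0 < sig a p c) (h3 : 0 < sig a b p)
    (avac : ∀ x ∈ O, x ∉ segment ℝ a c) (avbc : ∀ x ∈ O, x ∉ segment ℝ b c)
    (avap : ∀ x ∈ O, x ∉ segment ℝ a p) (avbp : ∀ x ∈ O, x ∉ segment ℝ b p)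
    (bab : (O ∩ openSegment ℝ a b).Nonempty) (bcp : (O ∩ openSegment ℝ c p).Nonempty) :
    False := by
  set T := convexHull ℝ ({a, b, c} : Set (ℝ × ℝ)) with hT
  set T' := convexHull ℝ ({a, b, p} : Set (ℝ × ℝ)) with hT'
  have hTclosed : IsClosed T := (Set.toFinite _).isClosed_convexHull (𝕜 := ℝ)
  have hT'closed : IsClosed T' := (Set.toFinite _).isClosed_convexHull (𝕜 := ℝ)
  have habp_lt : sig a b p < sig a b c := by
    have := sig_sum a b c p; linarith
  set U := (interior T ∩ {u : ℝ × ℝ | 0 < sig a b u}) ∩ T'ᶜ with hU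
  have hUopen : IsOpen U :=
    ((isOpen_interior.inter (isOpen_lt continuous_const (continuous_sig3 a b))).inter
      hT'closed.isOpen_compl)
  have hUsubT' : U ⊆ T'ᶜ := fun x hx => hx.2
  -- no point of the open segment ab is in the closure of U
  have hnotcl : ∀ z ∈ openSegment ℝ a b, z ∉ closure U := by
    rintro z ⟨s, t, hs, ht, hst, rfl⟩ hclz
    have hN : IsOpen {u : ℝ × ℝ | 0 < sig u b p ∧ 0 < sig a u p} := by
      have hset : {u : ℝ × ℝ | 0 < sig u b p ∧ 0 < sig a u p} =
          {u : ℝ × ℝ | 0 < sig u b p} ∩ {u : ℝ × ℝ | 0 < sig a u p} := by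
        ext u; simp [Set.mem_setOf_eq, Set.mem_inter_iff]
      rw [hset]
      exact (isOpen_lt continuous_const (continuous_sig1 b p)).inter
        (isOpen_lt continuous_const (continuous_sig2 a p))
    have hzN : (0:ℝ) < sig (s • a + t • b) b p ∧ (0:ℝ) < sig a (s • a + t • b) p := by
      constructor
      · rw [show sig (s • a + t • b) b p = sig b p (s • a + t • b) from sig_cyc _ b p,
          sig_combo2 _ _ _ _ _ _ hst, sig_self2,
          show sig b p a = sig a b p from (sig_cyc a b p).symm]
        nlinarith
      · rw [show sig a (s • a + t • b) p = sig p a (s • a + t • b) from sig_cyc' a _ p,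
          sig_combo2 _ _ _ _ _ _ hst, sig_self3,
          show sig p a b = sig a b p from sig_cyc p a b]
        nlinarith
    obtain ⟨u, huN, huU⟩ := mem_closure_iff.1 hclz _ hN hzN
    have huT' : u ∈ T' := mem_tri_sig h3 huN.1.le huN.2.le huU.1.2.le
    exact huU.2 huT'
  -- O is covered by U and the complement of the closure of U
  have hcover : O ⊆ U ∪ (closure U)ᶜ := by
    intro o hoO
    by_cases hcl : o ∈ closure U
    · left
      have hoT : o ∈ T :=
        closure_minimal (fun x hx => interior_subset hx.1.1) hTclosed hcl
      have hosig : (0:ℝ) ≤ sig a b o :=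
        closure_minimal (fun x hx => le_of_lt hx.1.2)
          (isClosed_le continuous_const (continuous_sig3 a b)) hcl
      have hnotab : o ∉ segment ℝ a b := by
        rintro ⟨s, t, hs, ht, hst, rfl⟩
        rcases eq_or_lt_of_le hs with hs0 | hs0
        · exact avbc _ hoO (by
            have hrw : s • a + t • b = b := by
              rw [← hs0, show t = 1 by linarith]; simp
            rw [hrw]; exact left_mem_segment ℝ b c)
        rcases eq_or_lt_of_le ht with ht0 | ht0
        · exact avac _ hoO (by
            have hrw : s • a + t • b = a := by
              rw [← ht0, show s = 1 by linarith]; simp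
            rw [hrw]; exact left_mem_segment ℝ a c)
        · exact hnotcl _ ⟨s, t, hs0, ht0, hst, rfl⟩ hcl
      have hosig' : (0:ℝ) < sig a b o := by
        rcases eq_or_lt_of_le hosig with h0 | h0
        · exfalso
          apply hnotab
          obtain ⟨α, β, γ, hα, hβ, hγ, hsum, hrep⟩ := tri_coords hoT
          have hsig : sig a b o = γ * sig a b c := by
            rw [hrep, sig_combo3 _ _ _ _ _ _ _ _ hsum, sig_self2, sig_self3]; ring
          have hγ0 : γ = 0 := by nlinarith
          exact ⟨α, β, hα, hβ, by linarith, by rw [hrep, hγ0]; simp⟩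
        · exact h0
      have honotT' : o ∉ T' := by
        intro hoT'
        have hclT' : o ∈ closure (T'ᶜ) := closure_mono hUsubT' hcl
        have honotint : o ∉ interior T' := by
          intro hint
          obtain ⟨w, hw1, hw2⟩ := mem_closure_iff.1 hclT' _ isOpen_interior hint
          exact hw2 (interior_subset hw1)
        rcases tri_cases h3 hoT' with h | h | h | h
        · exact honotint h
        · exact hnotab h
        · exact avbp o hoO h
        · exact avap o hoO h
      have hoint : o ∈ interior T := by
        rcases tri_cases he hoT with h | h | h | h
        · exact h
        · exact absurd h hnotab
        · exact (avbc o hoO h).elim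
        · exact (avac o hoO h).elim
      exact ⟨⟨hoint, hosig'⟩, honotT'⟩
    · right; exact hcl
  -- the two marked points
  obtain ⟨X, hXO, hXseg⟩ := bcp
  obtain ⟨s, t, hs, ht, hst, hXrep⟩ := hXseg
  have hXU : X ∈ U := by
    have d1 : 0 < sig X b c := by
      rw [show sig X b c = sig b c X from sig_cyc X b c, ← hXrep,
        sig_combo2 _ _ _ _ _ _ hst, sig_self3,
        show sig b c p = sig p b c from (sig_cyc p b c).symm]
      nlinarith
    have d2 : 0 < sig a X c := by
      rw [show sig a X c = sig c a X from sig_cyc' a X c, ← hXrep,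
        sig_combo2 _ _ _ _ _ _ hst, sig_self2,
        show sig c a p = sig a p c from sig_cyc c a p]
      nlinarith
    have d3 : 0 < sig a b X := by
      rw [← hXrep, sig_combo2 _ _ _ _ _ _ hst]
      nlinarith
    refine ⟨⟨interior_tri he d1 d2 d3, d3⟩, ?_⟩
    intro hXT'
    have hTle : T' ⊆ {u : ℝ × ℝ | sig a b u ≤ sig a b p} := by
      apply convexHull_min _ (convex_sig_le a b _)
      rintro x (rfl | rfl | rfl)
      · simp only [Set.mem_setOf_eq, sig_self2]; linarith
      · simp only [Set.mem_setOf_eq, sig_self3]; linarith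
      · simp only [Set.mem_setOf_eq]; exact le_rfl
    have hle := hTle hXT'
    simp only [Set.mem_setOf_eq] at hle
    have : sig a b X = s * sig a b c + t * sig a b p := by
      rw [← hXrep, sig_combo2 _ _ _ _ _ _ hst]
    nlinarith
  obtain ⟨Y, hYO, hYseg⟩ := bab
  have hYW : Y ∉ closure U := hnotcl Y hYseg
  have hdisj : Disjoint U (closure U)ᶜ :=
    Set.disjoint_left.2 fun x hx hxc => hxc (subset_closure hx)
  rcases hO.subset_or_subset hUopen isClosed_closure.isOpen_compl hdisj hcover with h | h
  · exact hYW (subset_closure (h hYO))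
  · exact (h hXO) (subset_closure hXU)



/-- helper: symmetrize an avoidance hypothesis -/
lemma av_symm {O : Set (ℝ × ℝ)} {P Q : ℝ × ℝ} (h : ∀ x ∈ O, x ∉ segment ℝ P Q) :
    ∀ x ∈ O, x ∉ segment ℝ Q P := by
  intro x hx hseg
  rw [segment_symm] at hseg
  exact h x hx hseg

/-- helper: symmetrize a blocking hypothesis -/
lemma bl_symm {O : Set (ℝ × ℝ)} {P Q : ℝ × ℝ} (h : (O ∩ openSegment ℝ P Q).Nonempty) :
    (O ∩ openSegment ℝ Q P).Nonempty := by
  rwa [openSegment_symm] at h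

/-- helper: from `u•D + w•E = D` with `u+w=1`, `w>0`, conclude `E = D`. -/
lemma combo_eq_endpoint {D E : ℝ × ℝ} {u w : ℝ} (hw : w ≠ 0) (huw : u + w = 1)
    (h5 : u • D + w • E = D) : E = D := by
  have h1 := congrArg Prod.fst h5
  have h2 := congrArg Prod.snd h5
  simp only [Prod.fst_add, Prod.snd_add, Prod.smul_fst, Prod.smul_snd, smul_eq_mul] at h1 h2
  apply Prod.ext
  · exact mul_left_cancel₀ hw (by linear_combination h1 - D.1 * huw)
  · exact mul_left_cancel₀ hw (by linear_combination h2 - D.2 * huw)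

/-- conv-alt quad ABCD plus a fifth point E strictly on D's side of line AB is
impossible (with the relevant obstacle hypotheses). -/
lemma convalt_half {A B C D E : ℝ × ℝ} {O : Set (ℝ × ℝ)} (hO : IsPreconnected O)
    (he1 : 0 < sig A B C) (he2 : sig A B D < 0) (he3 : sig A C D < 0) (he4 : 0 < sig B C D)
    (hf2 : sig A B E < 0) (hf3ne : sig A C E ≠ 0) (hf4ne : sig B C E ≠ 0) (hDE : D ≠ E)
    (avAC : ∀ x ∈ O, x ∉ segment ℝ A C) (avAD : ∀ x ∈ O, x ∉ segment ℝ A D)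
    (avBC : ∀ x ∈ O, x ∉ segment ℝ B C) (avBD : ∀ x ∈ O, x ∉ segment ℝ B D)
    (avAE : ∀ x ∈ O, x ∉ segment ℝ A E) (avBE : ∀ x ∈ O, x ∉ segment ℝ B E)
    (bAB : (O ∩ openSegment ℝ A B).Nonempty) (bCE : (O ∩ openSegment ℝ C E).Nonempty)
    (bDE : (O ∩ openSegment ℝ D E).Nonempty) : False := by
  have hQ1 := obstacle_in_quad hO he1 he2 he3 he4 avAC avBC avBD avAD bAB
  rcases hf3ne.lt_or_gt with hf3 | hf3
  · rcases hf4ne.lt_or_gt with hf4 | hf4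
    · -- pattern (+,-,-,-): B inside triangle ACE ; NC(E,C,A,B)
      refine no_concave hO (a := E) (b := C) (c := A) (p := B) ?_ ?_ ?_ ?_
        (av_symm avAE) (av_symm avAC) (av_symm avBE) (av_symm avBC)
        (bl_symm bCE) bAB
      · rw [show sig E C A = -sig A C E from by
          rw [show sig E C A = sig A E C from sig_cyc' E C A, sig_swap]]
        linarith
      · rw [show sig B C A = sig A B C from sig_cyc' B C A]; linarith
      · rw [show sig E B A = -sig A B E from by
          rw [show sig E B A = sig A E B from sig_cyc' E B A, sig_swap]]
        linarith
      · rw [show sig E C B = -sig B C E from by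
          rw [show sig E C B = sig B E C from sig_cyc' E C B, sig_swap]]
        linarith
    · -- conv-alt quad ABCE too: contradiction along segment DE
      have hQ2 := obstacle_in_quad hO he1 hf2 hf3 hf4 avAC avBC avBE avAE bAB
      obtain ⟨P, hPO, hPseg⟩ := bDE
      obtain ⟨u, w, hu, hw, huw, hPrep⟩ := hPseg
      have hsigP : sig A B P = u * sig A B D + w * sig A B E := by
        rw [← hPrep, sig_combo2 _ _ _ _ _ _ huw]
      have hsigPneg : sig A B P < 0 := by rw [hsigP]; nlinarith
      obtain ⟨x1, y1, z1, hx1, hy1, hz1, hsum1, hrep1, hzz1⟩ :=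
        split_neg he1 he2 he3 he4 (hQ1 hPO) hsigPneg.le
      obtain ⟨x2, y2, z2, hx2, hy2, hz2, hsum2, hrep2, hzz2⟩ :=
        split_neg he1 hf2 hf3 hf4 (hQ2 hPO) hsigPneg.le
      have hz1lt : z1 < 1 := by
        rcases lt_or_eq_of_le (show z1 ≤ 1 by linarith) with h | h
        · exact h
        · exfalso
          have hx10 : x1 = 0 := by linarith
          have hy10 : y1 = 0 := by linarith
          have hPD : P = D := by rw [hrep1, hx10, hy10, h]; simp
          apply hDE
          have h5 : u • D + w • E = D := by rw [hPrep, hPD]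
          exact (combo_eq_endpoint hw.ne' huw h5).symm
      have hz2lt : z2 < 1 := by
        rcases lt_or_eq_of_le (show z2 ≤ 1 by linarith) with h | h
        · exact h
        · exfalso
          have hx20 : x2 = 0 := by linarith
          have hy20 : y2 = 0 := by linarith
          have hPE : P = E := by rw [hrep2, hx20, hy20, h]; simp
          apply hDE
          have h5 : w • E + u • D = E := by rw [add_comm, hPrep, hPE]
          exact combo_eq_endpoint hu.ne' (by linarith) h5
      have k1 : sig A B D < sig A B P := by
        rw [hzz1]; nlinarith
      have k2 : sig A B E < sig A B P := by
        rw [hzz2]; nlinarith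
      nlinarith
  · rcases hf4ne.lt_or_gt with hf4 | hf4
    · -- pattern (+,-,+,-) impossible by the four-point relation
      have hq := sig_sum A B C E
      rw [show sig E B C = sig B C E from sig_cyc E B C,
        show sig A E C = -sig A C E from sig_swap A C E] at hq
      linarith
    · -- pattern (+,-,+,+): A inside triangle BCE ; NC(C,E,B,A)
      refine no_concave hO (a := C) (b := E) (c := B) (p := A) ?_ ?_ ?_ ?_
        (av_symm avBC) (av_symm avBE) (av_symm avAC) (av_symm avAE)
        bCE (bl_symm bAB)
      · rw [show sig C E B = sig B C E from sig_cyc' C E B]; linarith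
      · rw [show sig A E B = -sig A B E from sig_swap A B E]; linarith
      · rw [show sig C A B = sig A B C from sig_cyc C A B]; linarith
      · rw [show sig C E A = sig A C E from sig_cyc' C E A]; linarith

/-- the full conv-alt contradiction, both sides of line AB for E -/
lemma convalt_global {A B C D E : ℝ × ℝ} {O : Set (ℝ × ℝ)} (hO : IsPreconnected O)
    (he1 : 0 < sig A B C) (he2 : sig A B D < 0) (he3 : sig A C D < 0) (he4 : 0 < sig B C D)
    (hf2ne : sig A B E ≠ 0) (hACE : sig A C E ≠ 0) (hBCE : sig B C E ≠ 0)
    (hADE : sig A D E ≠ 0) (hBDE : sig B D E ≠ 0) (hCE : C ≠ E) (hDE : D ≠ E)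
    (avAC : ∀ x ∈ O, x ∉ segment ℝ A C) (avAD : ∀ x ∈ O, x ∉ segment ℝ A D)
    (avBC : ∀ x ∈ O, x ∉ segment ℝ B C) (avBD : ∀ x ∈ O, x ∉ segment ℝ B D)
    (avAE : ∀ x ∈ O, x ∉ segment ℝ A E) (avBE : ∀ x ∈ O, x ∉ segment ℝ B E)
    (bAB : (O ∩ openSegment ℝ A B).Nonempty) (bCE : (O ∩ openSegment ℝ C E).Nonempty)
    (bDE : (O ∩ openSegment ℝ D E).Nonempty) : False := by
  rcases hf2ne.lt_or_gt with hf2 | hf2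
  · exact convalt_half hO he1 he2 he3 he4 hf2 hACE hBCE hDE
      avAC avAD avBC avBD avAE avBE bAB bCE bDE
  · refine convalt_half (A := B) (B := A) (C := D) (D := C) (E := E) hO ?_ ?_ ?_ ?_ ?_
      hBDE hADE hCE avBD avBC avAD avAC avBE avAE (bl_symm bAB) bDE bCE
    · rw [sig_swap12]; linarith
    · rw [show sig B A C = -sig A B C from sig_swap12 A B C]; linarith
    · rw [show sig B D C = -sig B C D from sig_swap B C D]; linarith
    · rw [show sig A D C = -sig A C D from sig_swap A C D]; linarith
    · rw [show sig B A E = -sig A B E from sig_swap12 A B E]; linarith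


lemma collinear_of_sig_eq_zero {x y z : ℝ × ℝ} (h : sig x y z = 0) :
    Collinear ℝ ({x, y, z} : Set (ℝ × ℝ)) := by
  by_cases hxy : x = y
  · subst hxy
    rw [Set.insert_idem]
    exact collinear_pair ℝ x z
  · have hz : ∃ t : ℝ, z = x + t • (y - x) := by
      by_cases h1 : y.1 - x.1 = 0
      · have h2 : y.2 - x.2 ≠ 0 := fun hh => hxy (Prod.ext (by linarith) (by linarith))
        refine ⟨(z.2 - x.2) / (y.2 - x.2), ?_⟩
        apply Prod.ext
        · simp only [Prod.fst_add, Prod.smul_fst, Prod.fst_sub, smul_eq_mul]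
          simp only [sig] at h
          have h0 : (y.1 - x.1) * (z.2 - x.2) = 0 := mul_eq_zero_of_left h1 _
          have h3 : (y.2 - x.2) * (z.1 - x.1) = 0 := by linarith
          rcases mul_eq_zero.1 h3 with hh | hh
          · exact absurd hh h2
          · have : y.1 - x.1 = 0 := h1
            rw [this, mul_zero, add_zero]; linarith
        · simp only [Prod.snd_add, Prod.smul_snd, Prod.snd_sub, smul_eq_mul]
          field_simp
          ring
      · refine ⟨(z.1 - x.1) / (y.1 - x.1), ?_⟩
        apply Prod.ext
        · simp only [Prod.fst_add, Prod.smul_fst, Prod.fst_sub, smul_eq_mul]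
          field_simp
          ring
        · simp only [Prod.snd_add, Prod.smul_snd, Prod.snd_sub, smul_eq_mul]
          simp only [sig] at h
          field_simp
          nlinarith [h]
    obtain ⟨t, ht⟩ := hz
    have hmem : z ∈ line[ℝ, x, y] := by
      have : z = AffineMap.lineMap x y t := by
        rw [AffineMap.lineMap_apply_module, ht]; module
      rw [this]
      exact AffineMap.lineMap_mem_affineSpan_pair t x y
    have hcol := collinear_insert_of_mem_affineSpan_pair hmem
    have hset : ({x, y, z} : Set (ℝ × ℝ)) = {z, x, y} := by
      ext w; simp only [Set.mem_insert_iff, Set.mem_singleton_iff]; tauto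
    rwa [hset]


/-- `K*_{m,n}`: the complete bipartite graph `K_{m,n}` minus a maximum matching.
`b i = Sum.inl i` is adjacent to `r j = Sum.inr j` iff `i ≠ j` (as naturals). -/
def KStarGraph (m n : ℕ) : SimpleGraph (Fin m ⊕ Fin n) where
  Adj x y := match x, y with
    | Sum.inl i, Sum.inr j => (i : ℕ) ≠ (j : ℕ)
    | Sum.inr j, Sum.inl i => (i : ℕ) ≠ (j : ℕ)
    | _, _ => False
  symm := by constructor; rintro (i|i) (j|j) h <;> simp_all
  loopless := by constructor; rintro (i|i) h <;> simp_all

/-- in every 1-obstacle representation of `K*_{5,5}`, every induced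
`K_{2,2}` (on `b_i, b_j, r_k, r_l` with `i, j, k, l` pairwise distinct) is drawn
as a self-intersecting bowtie: one of the two pairings of open segments crosses. -/
theorem kstar55_bowtie (rep : ObstacleRep (KStarGraph 5 5) 1)
    (i j k l : Fin 5) (hij : i ≠ j) (hik : i ≠ k) (hil : i ≠ l)
    (hjk : j ≠ k) (hjl : j ≠ l) (hkl : k ≠ l) :
    (∃ x, x ∈ openSegment ℝ (rep.v (Sum.inl i)) (rep.v (Sum.inr k)) ∧
          x ∈ openSegment ℝ (rep.v (Sum.inl j)) (rep.v (Sum.inr l))) ∨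
    (∃ x, x ∈ openSegment ℝ (rep.v (Sum.inl i)) (rep.v (Sum.inr l)) ∧
          x ∈ openSegment ℝ (rep.v (Sum.inl j)) (rep.v (Sum.inr k))) := by
  classical
  obtain ⟨m, hmi, hmj, hmk, hml⟩ : ∃ m : Fin 5, m ≠ i ∧ m ≠ j ∧ m ≠ k ∧ m ≠ l := by
    have hcard : (({i, j, k, l} : Finset (Fin 5)))ᶜ.Nonempty := by
      rw [← Finset.card_pos, Finset.card_compl]
      have h4 : ({i, j, k, l} : Finset (Fin 5)).card ≤ 4 := by
        apply le_trans (Finset.card_insert_le _ _)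
        apply Nat.succ_le_succ
        apply le_trans (Finset.card_insert_le _ _)
        apply Nat.succ_le_succ
        apply le_trans (Finset.card_insert_le _ _)
        apply Nat.succ_le_succ
        simp
      simp only [Fintype.card_fin]
      omega
    obtain ⟨m, hm⟩ := hcard
    simp only [Finset.mem_compl, Finset.mem_insert, Finset.mem_singleton, not_or] at hm
    exact ⟨m, hm.1, hm.2.1, hm.2.2.1, hm.2.2.2⟩
  have hOconn : IsPreconnected (rep.obs 0) := (rep.obs_connected 0).isPreconnected
  have avoid : ∀ x y : Fin 5, x ≠ y →
      ∀ w ∈ rep.obs 0, w ∉ segment ℝ (rep.v (Sum.inl x)) (rep.v (Sum.inr y)) := by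
    intro x y hxy w hw hseg
    have hadj : (KStarGraph 5 5).Adj (Sum.inl x) (Sum.inr y) := by
      change (x : ℕ) ≠ (y : ℕ)
      exact fun hh => hxy (Fin.val_injective hh)
    exact Set.disjoint_left.1 (rep.obs_avoid_edges 0 _ _ hadj) hw hseg
  have blockedb : ∀ x y : Fin 5, x ≠ y →
      ((rep.obs 0) ∩ openSegment ℝ (rep.v (Sum.inl x)) (rep.v (Sum.inl y))).Nonempty := by
    intro x y hxy
    obtain ⟨i0, hi0⟩ := rep.blocks (Sum.inl x) (Sum.inl y) (by simpa using hxy)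
      (fun hadj => hadj)
    rwa [Subsingleton.elim i0 0] at hi0
  have blockedr : ∀ x y : Fin 5, x ≠ y →
      ((rep.obs 0) ∩ openSegment ℝ (rep.v (Sum.inr x)) (rep.v (Sum.inr y))).Nonempty := by
    intro x y hxy
    obtain ⟨i0, hi0⟩ := rep.blocks (Sum.inr x) (Sum.inr y) (by simpa using hxy)
      (fun hadj => hadj)
    rwa [Subsingleton.elim i0 0] at hi0
  have signe : ∀ P Q R : Fin 5 ⊕ Fin 5, P ≠ Q → P ≠ R → Q ≠ R →
      sig (rep.v P) (rep.v Q) (rep.v R) ≠ 0 := by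
    intro P Q R h1 h2 h3 h0
    exact rep.genpos P Q R h1 h2 h3 (collinear_of_sig_eq_zero h0)
  set A := rep.v (Sum.inl i) with hA
  set B := rep.v (Sum.inl j) with hB
  set C := rep.v (Sum.inr k) with hC
  set D := rep.v (Sum.inr l) with hD
  set E := rep.v (Sum.inr m) with hE
  have avIK := avoid i k hik
  have avIL := avoid i l hil
  have avJK := avoid j k hjk
  have avJL := avoid j l hjl
  have avIM := avoid i m (Ne.symm hmi)
  have avJM := avoid j m (Ne.symm hmj)
  have bAB := blockedb i j hij
  have bCD := blockedr k l hkl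
  have bCE := blockedr k m (Ne.symm hmk)
  have bDE := blockedr l m (Ne.symm hml)
  have he1ne : sig A B C ≠ 0 :=
    signe (Sum.inl i) (Sum.inl j) (Sum.inr k) (by simpa using hij) (by simp) (by simp)
  have he2ne : sig A B D ≠ 0 :=
    signe (Sum.inl i) (Sum.inl j) (Sum.inr l) (by simpa using hij) (by simp) (by simp)
  have he3ne : sig A C D ≠ 0 :=
    signe (Sum.inl i) (Sum.inr k) (Sum.inr l) (by simp) (by simp) (by simpa using hkl)
  have he4ne : sig B C D ≠ 0 :=
    signe (Sum.inl j) (Sum.inr k) (Sum.inr l) (by simp) (by simp) (by simpa using hkl)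
  have hABEne : sig A B E ≠ 0 :=
    signe (Sum.inl i) (Sum.inl j) (Sum.inr m) (by simpa using hij) (by simp) (by simp)
  have hBAEne : sig B A E ≠ 0 :=
    signe (Sum.inl j) (Sum.inl i) (Sum.inr m) (by simpa using hij.symm) (by simp) (by simp)
  have hACEne : sig A C E ≠ 0 :=
    signe (Sum.inl i) (Sum.inr k) (Sum.inr m) (by simp) (by simp)
      (by simpa using Ne.symm hmk)
  have hBCEne : sig B C E ≠ 0 :=
    signe (Sum.inl j) (Sum.inr k) (Sum.inr m) (by simp) (by simp)
      (by simpa using Ne.symm hmk)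
  have hADEne : sig A D E ≠ 0 :=
    signe (Sum.inl i) (Sum.inr l) (Sum.inr m) (by simp) (by simp)
      (by simpa using Ne.symm hml)
  have hBDEne : sig B D E ≠ 0 :=
    signe (Sum.inl j) (Sum.inr l) (Sum.inr m) (by simp) (by simp)
      (by simpa using Ne.symm hml)
  have hCE : C ≠ E := by
    rw [hC, hE]
    intro h
    exact Ne.symm hmk (Sum.inr.inj (rep.inj h))
  have hDE : D ≠ E := by
    rw [hD, hE]
    intro h
    exact Ne.symm hml (Sum.inr.inj (rep.inj h))
  have hq := sig_sum A B C D
  rw [show sig D B C = sig B C D from sig_cyc D B C,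
    show sig A D C = -sig A C D from sig_swap A C D] at hq
  rcases he1ne.lt_or_gt with h1 | h1 <;> rcases he2ne.lt_or_gt with h2 | h2 <;>
    rcases he3ne.lt_or_gt with h3 | h3 <;> rcases he4ne.lt_or_gt with h4 | h4
  -- (n,n,n,n) : bowtie, first pairing
  · refine Or.inl (cross_of_sig ?_ ?_)
    · rw [sig_swap A B C]; nlinarith
    · rw [sig_cyc' B D A, sig_swap B C D]; nlinarith
  -- (n,n,n,p) : C inside ABD; NC(B,A,D,C)
  · exact (no_concave hOconn
      (by rw [show sig B A D = -sig A B D from sig_swap12 A B D]; linarith)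
      (by rw [show sig C A D = -sig A C D from sig_swap12 A C D]; linarith)
      (h4)
      (by rw [show sig B A C = -sig A B C from sig_swap12 A B C]; linarith)
      avJL avIL avJK avIK (bl_symm bAB) (bl_symm bCD)).elim
  -- (n,n,p,n) : D inside ABC; NC(B,A,C,D)
  · exact (no_concave hOconn
      (by rw [show sig B A C = -sig A B C from sig_swap12 A B C]; linarith)
      (by rw [show sig D A C = sig A C D from sig_cyc D A C]; linarith)
      (by rw [show sig B D C = -sig B C D from sig_swap B C D]; linarith)
      (by rw [show sig B A D = -sig A B D from sig_swap12 A B D]; linarith)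
      avJK avIK avJL avIL (bl_symm bAB) bCD).elim
  -- (n,n,p,p) : bowtie, second pairing
  · refine Or.inr (cross_of_sig ?_ ?_)
    · rw [sig_swap A B D, sig_swap A C D]; nlinarith
    · rw [sig_cyc' B C A]; nlinarith
  -- (n,p,n,n) : A inside BCD; NC(D,C,B,A)
  · exact (no_concave hOconn
      (by rw [sig_cyc D C B, show sig C B D = -sig B C D from sig_swap12 B C D]; linarith)
      (by rw [show sig A C B = -sig A B C from sig_swap A B C]; linarith)
      (by rw [show sig D A B = sig A B D from sig_cyc D A B]; linarith)
      (by rw [sig_cyc D C A, show sig C A D = -sig A C D from sig_swap12 A C D]; linarith)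
      (av_symm avJL) (av_symm avJK) (av_symm avIL) (av_symm avIK)
      (bl_symm bCD) (bl_symm bAB)).elim
  -- (n,p,n,p) : impossible
  · exact absurd hq (by intro hh; linarith)
  -- (n,p,p,n) : conv-alt, mirrored
  · exact (convalt_global (A := B) (B := A) (C := C) (D := D) (E := E) hOconn
      (by rw [show sig B A C = -sig A B C from sig_swap12 A B C]; linarith)
      (by rw [show sig B A D = -sig A B D from sig_swap12 A B D]; linarith)
      h4 h3 hBAEne hBCEne hACEne hBDEne hADEne hCE hDE
      avJK avJL avIK avIL avJM avIM (bl_symm bAB) bCE bDE).elim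
  -- (n,p,p,p) : B inside ACD; NC(C,D,A,B)
  · exact (no_concave hOconn
      (by rw [show sig C D A = sig A C D from sig_cyc' C D A]; linarith)
      (by rw [show sig B D A = sig A B D from sig_cyc' B D A]; linarith)
      (by rw [sig_cyc C B A, show sig B A C = -sig A B C from sig_swap12 A B C]; linarith)
      (by rw [show sig C D B = sig B C D from sig_cyc' C D B]; linarith)
      (av_symm avIK) (av_symm avIL) (av_symm avJK) (av_symm avJL)
      bCD bAB).elim
  -- (p,n,n,n) : B inside ACD; NC(D,C,A,B)
  · exact (no_concave hOconn
      (by rw [sig_cyc D C A, show sig C A D = -sig A C D from sig_swap12 A C D]; linarith)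
      (by rw [show sig B C A = sig A B C from sig_cyc' B C A]; linarith)
      (by rw [sig_cyc D B A, show sig B A D = -sig A B D from sig_swap12 A B D]; linarith)
      (by rw [sig_cyc D C B, show sig C B D = -sig B C D from sig_swap12 B C D]; linarith)
      (av_symm avIL) (av_symm avIK) (av_symm avJL) (av_symm avJK)
      (bl_symm bCD) bAB).elim
  -- (p,n,n,p) : conv-alt, normalized
  · exact (convalt_global hOconn h1 h2 h3 h4 hABEne hACEne hBCEne hADEne hBDEne hCE hDE
      avIK avIL avJK avJL avIM avJM bAB bCE bDE).elim
  -- (p,n,p,n) : impossible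
  · exact absurd hq (by intro hh; linarith)
  -- (p,n,p,p) : A inside BCD; NC(C,D,B,A)
  · exact (no_concave hOconn
      (by rw [show sig C D B = sig B C D from sig_cyc' C D B]; linarith)
      (by rw [show sig A D B = -sig A B D from sig_swap A B D]; linarith)
      (by rw [show sig C A B = sig A B C from sig_cyc C A B]; linarith)
      (by rw [show sig C D A = sig A C D from sig_cyc' C D A]; linarith)
      (av_symm avJK) (av_symm avJL) (av_symm avIK) (av_symm avIL)
      bCD (bl_symm bAB)).elim
  -- (p,p,n,n) : bowtie, second pairing
  · refine Or.inr (cross_of_sig ?_ ?_)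
    · rw [sig_swap A B D, sig_swap A C D]; nlinarith
    · rw [sig_cyc' B C A]; nlinarith
  -- (p,p,n,p) : D inside ABC; NC(A,B,C,D)
  · exact (no_concave hOconn h1
      (by rw [show sig D B C = sig B C D from sig_cyc D B C]; linarith)
      (by rw [show sig A D C = -sig A C D from sig_swap A C D]; linarith)
      h2 avIK avJK avIL avJL bAB bCD).elim
  -- (p,p,p,n) : C inside ABD; NC(A,B,D,C)
  · exact (no_concave hOconn h2
      (by rw [show sig C B D = -sig B C D from sig_swap12 B C D]; linarith)
      h3 h1 avIL avJL avIK avJK bAB (bl_symm bCD)).elim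
  -- (p,p,p,p) : bowtie, first pairing
  · refine Or.inl (cross_of_sig ?_ ?_)
    · rw [sig_swap A B C]; nlinarith
    · rw [sig_cyc' B D A, sig_swap B C D]; nlinarith
end

section
/- Every 1-obstacle representation of K*_{5,5} is an outside obstacle representation: the obstacle is contained in the unbounded connected component of the complement in ℝ² of the union of the closed segments [v(p), v(q)] over all edges pq of K*_{5,5}. -/
open Set

namespace KOut


/-- 2D cross product of `Q - P` and `Y - P`. -/
def cr (P Q Y : ℝ × ℝ) : ℝ := (Q.1 - P.1) * (Y.2 - P.2) - (Q.2 - P.2) * (Y.1 - P.1)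

lemma cr_cyclic (P Q Y : ℝ × ℝ) : cr P Q Y = cr Q Y P := by unfold cr; ring

lemma cr_swap (P Q Y : ℝ × ℝ) : cr Q P Y = - cr P Q Y := by unfold cr; ring

lemma cr_self_left (P Y : ℝ × ℝ) : cr P P Y = 0 := by unfold cr; ring

lemma cr_self_mid (P Q : ℝ × ℝ) : cr P Q P = 0 := by unfold cr; ring

lemma cr_self_right (P Q : ℝ × ℝ) : cr P Q Q = 0 := by unfold cr; ring

lemma continuous_cr (P Q : ℝ × ℝ) : Continuous fun y : ℝ × ℝ => cr P Q y := by
  unfold cr; fun_prop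

lemma cr_combo (P Q u w : ℝ × ℝ) {a b : ℝ} (hab : a + b = 1) :
    cr P Q (a • u + b • w) = a * cr P Q u + b * cr P Q w := by
  have hb : b = 1 - a := by linarith
  subst hb
  simp only [cr, Prod.fst_add, Prod.snd_add, Prod.smul_fst, Prod.smul_snd, smul_eq_mul]
  ring

lemma cr_line (X Y A B : ℝ × ℝ) (s : ℝ) :
    cr X Y (A + s • (B - A)) = (1 - s) * cr X Y A + s * cr X Y B := by
  simp only [cr, Prod.fst_add, Prod.snd_add, Prod.smul_fst, Prod.smul_snd, Prod.fst_sub,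
    Prod.snd_sub, smul_eq_mul]
  ring

lemma param {P Q y : ℝ × ℝ} (h : cr P Q y = 0) (hPQ : P ≠ Q) :
    ∃ s : ℝ, y = P + s • (Q - P) := by
  unfold cr at h
  rcases eq_or_ne (Q.1 - P.1) 0 with hdx | hdx
  · have hdy : Q.2 - P.2 ≠ 0 := by
      intro hdy
      exact hPQ (Prod.ext_iff.2 ⟨by linarith, by linarith⟩)
    refine ⟨(y.2 - P.2) / (Q.2 - P.2), Prod.ext_iff.2 ⟨?_, ?_⟩⟩
    · have h1 : y.1 = P.1 := by
        have : (Q.2 - P.2) * (y.1 - P.1) = 0 := by rw [hdx] at h; linarith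
        rcases mul_eq_zero.1 this with h' | h'
        · exact absurd h' hdy
        · linarith
      simp only [Prod.fst_add, Prod.smul_fst, Prod.fst_sub, smul_eq_mul]
      rw [hdx]; simpa using h1
    · simp only [Prod.snd_add, Prod.smul_snd, Prod.snd_sub, smul_eq_mul]
      field_simp; ring
  · refine ⟨(y.1 - P.1) / (Q.1 - P.1), Prod.ext_iff.2 ⟨?_, ?_⟩⟩
    · simp only [Prod.fst_add, Prod.smul_fst, Prod.fst_sub, smul_eq_mul]
      field_simp; ring
    · simp only [Prod.snd_add, Prod.smul_snd, Prod.snd_sub, smul_eq_mul]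
      field_simp
      linear_combination h

lemma collinear_of_cr_eq_zero {P Q Y : ℝ × ℝ} (h : cr P Q Y = 0) :
    Collinear ℝ ({P, Q, Y} : Set (ℝ × ℝ)) := by
  rcases eq_or_ne P Q with rfl | hPQ
  · have : ({P, P, Y} : Set (ℝ × ℝ)) = {P, Y} := by simp
    rw [this]
    exact collinear_pair ℝ P Y
  · obtain ⟨s, hs⟩ := param h hPQ
    rw [collinear_iff_of_mem (Set.mem_insert P {Q, Y})]
    refine ⟨Q - P, ?_⟩
    rintro y (rfl | rfl | rfl)
    · exact ⟨0, by simp⟩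
    · exact ⟨1, by simp⟩
    · exact ⟨s, by rw [hs]; simp [vadd_eq_add]; abel⟩

lemma cr_ne_zero {P Q Y : ℝ × ℝ} (h : ¬ Collinear ℝ ({P, Q, Y} : Set (ℝ × ℝ))) :
    cr P Q Y ≠ 0 := fun h0 => h (collinear_of_cr_eq_zero h0)



variable {H : Set (ℝ × ℝ)}

lemma extreme_not_interior {P : ℝ × ℝ} (hP : P ∈ H.extremePoints ℝ) : P ∉ interior H := by
  intro hPi
  rw [mem_interior_iff_mem_nhds, Metric.mem_nhds_iff] at hPi
  obtain ⟨ε, hε, hball⟩ := hPi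
  have h1 : P + (ε / 2, 0) ∈ H := by
    apply hball
    rw [Metric.mem_ball, Prod.dist_eq, max_lt_iff]
    constructor
    · rw [Real.dist_eq, Prod.fst_add]
      rw [show P.1 + (ε/2, (0:ℝ)).1 - P.1 = ε/2 by simp, abs_of_pos (by linarith)]; linarith
    · rw [Real.dist_eq, Prod.snd_add]
      rw [show P.2 + (ε/2, (0:ℝ)).2 - P.2 = 0 by simp, abs_zero]; linarith
  have h2 : P - (ε / 2, 0) ∈ H := by
    apply hball
    rw [Metric.mem_ball, Prod.dist_eq, max_lt_iff]
    constructor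
    · rw [Real.dist_eq, Prod.fst_sub]
      rw [show P.1 - (ε/2, (0:ℝ)).1 - P.1 = -(ε/2) by simp, abs_neg,
        abs_of_pos (by linarith)]; linarith
    · rw [Real.dist_eq, Prod.snd_sub]
      rw [show P.2 - (ε/2, (0:ℝ)).2 - P.2 = 0 by simp, abs_zero]; linarith
  have hmem : P ∈ openSegment ℝ (P + (ε / 2, 0)) (P - (ε / 2, 0)) := by
    refine ⟨1/2, 1/2, by norm_num, by norm_num, by norm_num, ?_⟩
    apply Prod.ext_iff.2
    constructor <;>
      simp only [Prod.fst_add, Prod.snd_add, Prod.fst_sub, Prod.snd_sub, Prod.smul_fst,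
        Prod.smul_snd, smul_eq_mul] <;> ring
  have := hP.2 h1 h2 hmem
  have := congrArg Prod.fst this
  simp only [Prod.fst_add] at this
  linarith

lemma mem_openSegment_of_interior {P Q y : ℝ × ℝ} (hP : P ∈ H.extremePoints ℝ)
    (hQ : Q ∈ H.extremePoints ℝ) (hPQ : P ≠ Q) (hy : y ∈ interior H)
    (h0 : cr P Q y = 0) : y ∈ openSegment ℝ P Q := by
  obtain ⟨s, rfl⟩ := param h0 hPQ
  rcases lt_trichotomy s 0 with hs | rfl | hs
  · exfalso
    have h1s : (0:ℝ) < 1 - s := by linarith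
    have hmem : P ∈ openSegment ℝ (P + s • (Q - P)) Q := by
      refine ⟨1/(1-s), -s/(1-s), by positivity, div_pos (by linarith) h1s, by field_simp; ring, ?_⟩
      apply Prod.ext_iff.2
      constructor <;>
        simp only [Prod.fst_add, Prod.snd_add, Prod.fst_sub, Prod.snd_sub, Prod.smul_fst,
          Prod.smul_snd, smul_eq_mul] <;> field_simp <;> ring
    have := hP.2 hQ.1 (interior_subset hy) (by rw [openSegment_symm]; exact hmem)
    exact hPQ this.symm
  · exfalso
    simp only [zero_smul, add_zero] at hy
    exact extreme_not_interior hP hy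
  · rcases lt_trichotomy s 1 with hs1 | rfl | hs1
    · refine ⟨1 - s, s, by linarith, hs, by ring, ?_⟩
      apply Prod.ext_iff.2
      constructor <;>
        simp only [Prod.fst_add, Prod.snd_add, Prod.fst_sub, Prod.snd_sub, Prod.smul_fst,
          Prod.smul_snd, smul_eq_mul] <;> ring
    · exfalso
      have : P + (1:ℝ) • (Q - P) = Q := by
        apply Prod.ext_iff.2
        constructor <;>
          simp only [Prod.fst_add, Prod.snd_add, Prod.fst_sub, Prod.snd_sub, Prod.smul_fst,
            Prod.smul_snd, smul_eq_mul] <;> ring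
      rw [this] at hy
      exact extreme_not_interior hQ hy
    · exfalso
      have hs0 : (0:ℝ) < s := by linarith
      have hmem : Q ∈ openSegment ℝ P (P + s • (Q - P)) := by
        refine ⟨(s-1)/s, 1/s, div_pos (by linarith) hs0, by positivity, by field_simp; ring, ?_⟩
        apply Prod.ext_iff.2
        constructor <;>
          simp only [Prod.fst_add, Prod.snd_add, Prod.fst_sub, Prod.snd_sub, Prod.smul_fst,
            Prod.smul_snd, smul_eq_mul] <;> field_simp <;> ring
      have := hQ.2 hP.1 (interior_subset hy) hmem
      exact hPQ this



variable {H : Set (ℝ × ℝ)}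
/-- a point on a parameterized closed sub-segment lies in the segment -/
lemma mem_segment_param {A B : ℝ × ℝ} {s : ℝ} (h0 : 0 ≤ s) (h1 : s ≤ 1) :
    A + s • (B - A) ∈ segment ℝ A B := by
  rw [segment_eq_image']
  exact ⟨s, ⟨h0, h1⟩, rfl⟩

/-- The key separation lemma: if the connected set `C` lives in the interior of `H`,
avoids the two segments `[P,W]` and `[W,Q]` (where `P`, `Q` are extreme points of `H`
and `W` is strictly on the positive side of line `PQ`), and meets the open segment
`(P,Q)`, then `C` stays strictly below level `cr P Q W`. -/
lemma lemA {P Q W : ℝ × ℝ} {C : Set (ℝ × ℝ)}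
    (hP : P ∈ H.extremePoints ℝ) (hQ : Q ∈ H.extremePoints ℝ)
    (hD : 0 < cr P Q W)
    (hCH : C ⊆ interior H) (hCc : IsPreconnected C)
    (hC1 : ∀ c ∈ C, c ∉ segment ℝ P W) (hC2 : ∀ c ∈ C, c ∉ segment ℝ W Q)
    (hmeet : (C ∩ openSegment ℝ P Q).Nonempty) :
    ∀ c ∈ C, cr P Q c < cr P Q W := by
  have hPQ : P ≠ Q := by
    rintro rfl; rw [cr_self_left] at hD; exact lt_irrefl 0 hD
  have hWP : W ≠ P := by
    rintro rfl; rw [cr_self_mid] at hD; exact lt_irrefl 0 hD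
  have hWQ : W ≠ Q := by
    rintro rfl; rw [cr_self_right] at hD; exact lt_irrefl 0 hD
  set D := cr P Q W with hDdef
  -- auxiliary values
  have hg1Q : cr W P Q = D := by unfold D; unfold cr; ring
  have hg2P : cr Q W P = D := by unfold D; unfold cr; ring
  have hid : ∀ y, cr P Q y + cr W P y + cr Q W y = D := by
    intro y; unfold D; unfold cr; ring
  have hgseg : ∀ y ∈ openSegment ℝ P Q, cr P Q y = 0 := by
    rintro y ⟨a, b, ha, hb, hab, rfl⟩
    rw [cr_combo P Q P Q hab, cr_self_mid, cr_self_right]; ring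
  set T : Set (ℝ × ℝ) := {y | 0 < cr P Q y ∧ 0 < cr W P y ∧ 0 < cr Q W y} with hT
  set A : Set (ℝ × ℝ) :=
    (interior H ∩ {y | cr P Q y < 0}) ∪ (openSegment ℝ P Q ∩ interior H) ∪ T with hA
  set B : Set (ℝ × ℝ) :=
    (interior H ∩ {y | 0 < cr P Q y}) ∩ ({y | cr W P y < 0} ∪ {y | cr Q W y < 0}) with hB
  have hTopen : IsOpen T := by
    apply IsOpen.inter (isOpen_lt continuous_const (continuous_cr P Q))
    exact IsOpen.inter (isOpen_lt continuous_const (continuous_cr W P))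
      (isOpen_lt continuous_const (continuous_cr Q W))
  have hTsubA : T ⊆ A := fun y hy => Or.inr hy
  have h1open : IsOpen (interior H ∩ {y | cr P Q y < 0}) :=
    IsOpen.inter isOpen_interior (isOpen_lt (continuous_cr P Q) continuous_const)
  have hAopen : IsOpen A := by
    rw [isOpen_iff_mem_nhds]
    intro z hz
    rcases hz with (hz | hz) | hz
    · exact Filter.mem_of_superset (h1open.mem_nhds hz) (fun y hy => Or.inl (Or.inl hy))
    · -- z on the open segment, inside interior H
      obtain ⟨hzseg, hzint⟩ := hz
      set U : Set (ℝ × ℝ) :=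
        interior H ∩ {y | 0 < cr W P y} ∩ {y | 0 < cr Q W y} with hU
      have hUopen : IsOpen U := by
        apply IsOpen.inter
        exact IsOpen.inter isOpen_interior (isOpen_lt continuous_const (continuous_cr W P))
        exact isOpen_lt continuous_const (continuous_cr Q W)
      have hzU : z ∈ U := by
        obtain ⟨a, b, ha, hb, hab, rfl⟩ := hzseg
        refine ⟨⟨hzint, ?_⟩, ?_⟩
        · show 0 < cr W P _
          rw [cr_combo W P P Q hab, cr_self_right, hg1Q]
          simpa using mul_pos hb hD
        · show 0 < cr Q W _
          rw [cr_combo Q W P Q hab, hg2P, cr_self_mid]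
          simpa using mul_pos ha hD
      refine Filter.mem_of_superset (hUopen.mem_nhds hzU) ?_
      rintro y ⟨⟨hyint, hy1⟩, hy2⟩
      rcases lt_trichotomy (cr P Q y) 0 with h | h | h
      · exact Or.inl (Or.inl ⟨hyint, h⟩)
      · exact Or.inl (Or.inr ⟨mem_openSegment_of_interior hP hQ hPQ hyint h, hyint⟩)
      · exact Or.inr ⟨h, hy1, hy2⟩
    · exact Filter.mem_of_superset (hTopen.mem_nhds hz) hTsubA
  have hBopen : IsOpen B := by
    apply IsOpen.inter
    · exact IsOpen.inter isOpen_interior (isOpen_lt continuous_const (continuous_cr P Q))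
    · exact IsOpen.union (isOpen_lt (continuous_cr W P) continuous_const)
        (isOpen_lt (continuous_cr Q W) continuous_const)
  have hdisj : Disjoint A B := by
    rw [Set.disjoint_left]
    rintro y hy ⟨⟨-, hg⟩, hor⟩
    have hg' : 0 < cr P Q y := hg
    rcases hy with ((⟨-, h⟩ | h) | h)
    · have h' : cr P Q y < 0 := h
      linarith
    · have := hgseg y h.1
      linarith
    · rcases hor with h1 | h2
      · have h1' : cr W P y < 0 := h1
        have h2' : 0 < cr W P y := h.2.1
        linarith
      · have h1' : cr Q W y < 0 := h2
        have h2' : 0 < cr Q W y := h.2.2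
        linarith
  have hcover : C ⊆ A ∪ B := by
    intro c hc
    have hci := hCH hc
    rcases lt_trichotomy (cr P Q c) 0 with h | h | h
    · exact Or.inl (Or.inl (Or.inl ⟨hci, h⟩))
    · exact Or.inl (Or.inl (Or.inr ⟨mem_openSegment_of_interior hP hQ hPQ hci h, hci⟩))
    · by_cases h1 : 0 < cr W P c
      · by_cases h2 : 0 < cr Q W c
        · exact Or.inl (Or.inr ⟨h, h1, h2⟩)
        · rcases (not_lt.1 h2).lt_or_eq with h2' | h2'
          · exact Or.inr ⟨⟨hci, h⟩, Or.inr h2'⟩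
          · -- cr Q W c = 0 : c is on line (Q, W)
            obtain ⟨s, rfl⟩ := param h2' hWQ.symm
            have hval : cr P Q (Q + s • (W - Q)) = s * D := by
              rw [cr_line P Q Q W s, cr_self_right]; ring
            have hval1 : cr W P (Q + s • (W - Q)) = (1 - s) * D := by
              rw [cr_line W P Q W s, hg1Q, cr_self_mid]; ring
            have hgc : 0 < s * D := by rw [hval] at h; exact h
            have hs : 0 < s := by nlinarith
            rcases le_or_gt s 1 with hs1 | hs1
            · exfalso
              apply hC2 _ hc
              rw [segment_symm]
              exact mem_segment_param hs.le hs1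
            · refine Or.inr ⟨⟨hci, h⟩, Or.inl ?_⟩
              show cr W P _ < 0
              rw [hval1]
              nlinarith
      · rcases (not_lt.1 h1).lt_or_eq with h1' | h1'
        · exact Or.inr ⟨⟨hci, h⟩, Or.inl h1'⟩
        · -- cr W P c = 0 : c is on line (W, P)
          obtain ⟨s, rfl⟩ := param h1' hWP
          have hval : cr P Q (W + s • (P - W)) = (1 - s) * D := by
            rw [cr_line P Q W P s, cr_self_mid]; ring
          have hval2 : cr Q W (W + s • (P - W)) = s * D := by
            rw [cr_line Q W W P s, cr_self_right, hg2P]; ring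
          have hgc : 0 < (1 - s) * D := by rw [hval] at h; exact h
          have hs1 : s < 1 := by nlinarith
          rcases le_or_gt 0 s with hs0 | hs0
          · exfalso
            apply hC1 _ hc
            rw [segment_symm]
            exact mem_segment_param hs0 hs1.le
          · refine Or.inr ⟨⟨hci, h⟩, Or.inr ?_⟩
            show cr Q W _ < 0
            rw [hval2]
            nlinarith
  obtain ⟨z, hzC, hzseg⟩ := hmeet
  have hCA : C ⊆ A :=
    hCc.subset_left_of_subset_union hAopen hBopen hdisj hcover
      ⟨z, hzC, Or.inl (Or.inr ⟨hzseg, hCH hzC⟩)⟩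
  intro c hc
  rcases hCA hc with ((⟨-, h⟩ | h) | h)
  · have h' : cr P Q c < 0 := h
    linarith
  · rw [hgseg c h.1]; exact hD
  · have := hid c
    have h1 : 0 < cr W P c := h.2.1
    have h2 : 0 < cr Q W c := h.2.2
    linarith



variable {H : Set (ℝ × ℝ)}

/-- two valid witnesses on the same (positive) side of line PQ give a contradiction -/
lemma helper_pos {P Q W W' : ℝ × ℝ} {C : Set (ℝ × ℝ)}
    (hP : P ∈ H.extremePoints ℝ) (hQ : Q ∈ H.extremePoints ℝ)
    (hDW : 0 < cr P Q W) (hDW' : 0 < cr P Q W')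
    (hCH : C ⊆ interior H) (hCc : IsPreconnected C)
    (hW1 : ∀ c ∈ C, c ∉ segment ℝ P W) (hW2 : ∀ c ∈ C, c ∉ segment ℝ W Q)
    (hW'1 : ∀ c ∈ C, c ∉ segment ℝ P W') (hW'2 : ∀ c ∈ C, c ∉ segment ℝ W' Q)
    (hmeetPQ : (C ∩ openSegment ℝ P Q).Nonempty)
    (hmeetWW' : (C ∩ openSegment ℝ W W').Nonempty) : False := by
  have h1 := lemA hP hQ hDW hCH hCc hW1 hW2 hmeetPQ
  have h2 := lemA hP hQ hDW' hCH hCc hW'1 hW'2 hmeetPQ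
  obtain ⟨z, hzC, a, b, ha, hb, hab, rfl⟩ := hmeetWW'
  have e1 := h1 _ hzC
  have e2 := h2 _ hzC
  rw [cr_combo P Q W W' hab] at e1 e2
  nlinarith [mul_lt_mul_of_pos_left e1 ha, mul_lt_mul_of_pos_left e2 hb]

/-- the negative-side version -/
lemma helper_neg {P Q W W' : ℝ × ℝ} {C : Set (ℝ × ℝ)}
    (hP : P ∈ H.extremePoints ℝ) (hQ : Q ∈ H.extremePoints ℝ)
    (hDW : cr P Q W < 0) (hDW' : cr P Q W' < 0)
    (hCH : C ⊆ interior H) (hCc : IsPreconnected C)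
    (hW1 : ∀ c ∈ C, c ∉ segment ℝ P W) (hW2 : ∀ c ∈ C, c ∉ segment ℝ W Q)
    (hW'1 : ∀ c ∈ C, c ∉ segment ℝ P W') (hW'2 : ∀ c ∈ C, c ∉ segment ℝ W' Q)
    (hmeetPQ : (C ∩ openSegment ℝ P Q).Nonempty)
    (hmeetWW' : (C ∩ openSegment ℝ W W').Nonempty) : False := by
  apply helper_pos (P := Q) (Q := P) (W := W) (W' := W') hQ hP
    (by rw [cr_swap]; linarith) (by rw [cr_swap]; linarith) hCH hCc
    (fun c hc => by rw [segment_symm]; exact hW2 c hc)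
    (fun c hc => by rw [segment_symm]; exact hW1 c hc)
    (fun c hc => by rw [segment_symm]; exact hW'2 c hc)
    (fun c hc => by rw [segment_symm]; exact hW'1 c hc)
    (by rwa [openSegment_symm]) hmeetWW'

/-- three witnesses, none on the line: contradiction -/
lemma no_inside {P Q W1 W2 W3 : ℝ × ℝ} {C : Set (ℝ × ℝ)}
    (hP : P ∈ H.extremePoints ℝ) (hQ : Q ∈ H.extremePoints ℝ)
    (h1 : cr P Q W1 ≠ 0) (h2 : cr P Q W2 ≠ 0) (h3 : cr P Q W3 ≠ 0)
    (hCH : C ⊆ interior H) (hCc : IsPreconnected C)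
    (hs1a : ∀ c ∈ C, c ∉ segment ℝ P W1) (hs1b : ∀ c ∈ C, c ∉ segment ℝ W1 Q)
    (hs2a : ∀ c ∈ C, c ∉ segment ℝ P W2) (hs2b : ∀ c ∈ C, c ∉ segment ℝ W2 Q)
    (hs3a : ∀ c ∈ C, c ∉ segment ℝ P W3) (hs3b : ∀ c ∈ C, c ∉ segment ℝ W3 Q)
    (hmPQ : (C ∩ openSegment ℝ P Q).Nonempty)
    (hm12 : (C ∩ openSegment ℝ W1 W2).Nonempty)
    (hm13 : (C ∩ openSegment ℝ W1 W3).Nonempty)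
    (hm23 : (C ∩ openSegment ℝ W2 W3).Nonempty) : False := by
  rcases h1.lt_or_gt with n1 | p1 <;> rcases h2.lt_or_gt with n2 | p2 <;>
    rcases h3.lt_or_gt with n3 | p3
  · exact helper_neg hP hQ n1 n2 hCH hCc hs1a hs1b hs2a hs2b hmPQ hm12
  · exact helper_neg hP hQ n1 n2 hCH hCc hs1a hs1b hs2a hs2b hmPQ hm12
  · exact helper_neg hP hQ n1 n3 hCH hCc hs1a hs1b hs3a hs3b hmPQ hm13
  · exact helper_pos hP hQ p2 p3 hCH hCc hs2a hs2b hs3a hs3b hmPQ hm23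
  · exact helper_neg hP hQ n2 n3 hCH hCc hs2a hs2b hs3a hs3b hmPQ hm23
  · exact helper_pos hP hQ p1 p3 hCH hCc hs1a hs1b hs3a hs3b hmPQ hm13
  · exact helper_pos hP hQ p1 p2 hCH hCc hs1a hs1b hs2a hs2b hmPQ hm12
  · exact helper_pos hP hQ p1 p2 hCH hCc hs1a hs1b hs2a hs2b hmPQ hm12



/-- the interior of the convex hull is nonempty as soon as we have three
points of `S` not on a line. -/
lemma centroid_interior {a b c : ℝ × ℝ} {S : Set (ℝ × ℝ)} (ha : a ∈ S) (hb : b ∈ S)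
    (hc : c ∈ S) (hd : cr a b c ≠ 0) : (interior (convexHull ℝ S)).Nonempty := by
  set H := convexHull ℝ S with hHdef
  have hconv : Convex ℝ H := convex_convexHull ℝ S
  have haH : a ∈ H := subset_convexHull ℝ S ha
  have hbH : b ∈ H := subset_convexHull ℝ S hb
  have hcH : c ∈ H := subset_convexHull ℝ S hc
  have hd2pos : 0 < cr a b c ^ 2 := by positivity
  set O : Set (ℝ × ℝ) :=
    {y | 0 < cr a b c * cr a b y ∧ 0 < cr a b c * cr b c y ∧ 0 < cr a b c * cr c a y} with hO
  have hOopen : IsOpen O := by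
    apply IsOpen.inter (isOpen_lt continuous_const (continuous_const.mul (continuous_cr a b)))
    exact IsOpen.inter (isOpen_lt continuous_const (continuous_const.mul (continuous_cr b c)))
      (isOpen_lt continuous_const (continuous_const.mul (continuous_cr c a)))
  set m : ℝ × ℝ := (1/3 : ℝ) • a + (1/3 : ℝ) • b + (1/3 : ℝ) • c with hm
  have hmO : m ∈ O := by
    have e1 : cr a b m = cr a b c / 3 := by
      rw [hm]
      simp only [cr, Prod.fst_add, Prod.snd_add, Prod.smul_fst, Prod.smul_snd, smul_eq_mul]
      ring
    have e2 : cr b c m = cr a b c / 3 := by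
      rw [hm]
      simp only [cr, Prod.fst_add, Prod.snd_add, Prod.smul_fst, Prod.smul_snd, smul_eq_mul]
      ring
    have e3 : cr c a m = cr a b c / 3 := by
      rw [hm]
      simp only [cr, Prod.fst_add, Prod.snd_add, Prod.smul_fst, Prod.smul_snd, smul_eq_mul]
      ring
    refine ⟨?_, ?_, ?_⟩ <;> [rw [e1]; rw [e2]; rw [e3]] <;>
      · show (0:ℝ) < cr a b c * (cr a b c / 3); nlinarith
  have hOH : O ⊆ H := by
    rintro y ⟨h1, h2, h3⟩
    have hsum : cr b c y + cr c a y + cr a b y = cr a b c := by unfold cr; ring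
    have hαpos : 0 < cr b c y / cr a b c := by
      rw [show cr b c y / cr a b c = cr a b c * cr b c y / cr a b c ^ 2 by
        field_simp]
      exact div_pos h2 hd2pos
    have hβpos : 0 < cr c a y / cr a b c := by
      rw [show cr c a y / cr a b c = cr a b c * cr c a y / cr a b c ^ 2 by
        field_simp]
      exact div_pos h3 hd2pos
    have hγpos : 0 < cr a b y / cr a b c := by
      rw [show cr a b y / cr a b c = cr a b c * cr a b y / cr a b c ^ 2 by
        field_simp]
      exact div_pos h1 hd2pos
    have hsum1 : cr b c y / cr a b c + cr c a y / cr a b c + cr a b y / cr a b c = 1 := by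
      rw [← add_div, ← add_div, hsum, div_self hd]
    have hβγ : 0 < cr c a y / cr a b c + cr a b y / cr a b c := by linarith
    have hvec : cr b c y • a + (cr c a y • b + cr a b y • c) = cr a b c • y := by
      apply Prod.ext_iff.2
      constructor <;>
        · simp only [cr, Prod.fst_add, Prod.snd_add, Prod.smul_fst, Prod.smul_snd, smul_eq_mul]
          ring
    have hbary : (cr b c y / cr a b c) • a +
        ((cr c a y / cr a b c) • b + (cr a b y / cr a b c) • c) = y := by
      rw [div_eq_inv_mul, div_eq_inv_mul, div_eq_inv_mul, ← smul_smul, ← smul_smul, ← smul_smul,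
        ← smul_add, ← smul_add, hvec, smul_smul, inv_mul_cancel₀ hd, one_smul]
    set s := cr c a y / cr a b c with hsdef
    set t := cr a b y / cr a b c with htdef
    have hst : s + t ≠ 0 := ne_of_gt hβγ
    have hw'H : (s / (s + t)) • b + (t / (s + t)) • c ∈ H :=
      hconv hbH hcH (by positivity) (by positivity) (by field_simp)
    have hweq : (s + t) • ((s / (s + t)) • b + (t / (s + t)) • c) = s • b + t • c := by
      rw [smul_add, smul_smul, smul_smul]
      congr 1 <;> congr 1 <;> field_simp
    have : y ∈ H := by
      rw [← hbary, ← hweq]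
      exact hconv haH hw'H hαpos.le hβγ.le (by linarith)
    exact this
  exact ⟨m, mem_interior.2 ⟨O, hOH, hOopen, hmO⟩⟩



/-- if some point of the connected set `C` is not in the interior of the hull,
then the connected component of any `x ∈ C` in `Eᶜ` is unbounded. -/
lemma escape {S E C : Set (ℝ × ℝ)} {z x : ℝ × ℝ}
    (hES : E ⊆ convexHull ℝ S)
    (hmint : (interior (convexHull ℝ S)).Nonempty)
    (hCc : IsPreconnected C) (hCE : ∀ c ∈ C, c ∉ E)
    (hzC : z ∈ C) (hz : z ∉ interior (convexHull ℝ S)) (hxC : x ∈ C) :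
    ¬ Bornology.IsBounded (connectedComponentIn Eᶜ x) := by
  set H := convexHull ℝ S with hHdef
  have hconv : Convex ℝ H := convex_convexHull ℝ S
  obtain ⟨f, hf⟩ := geometric_hahn_banach_open_point (hconv.interior) isOpen_interior hz
  obtain ⟨m, hm⟩ := hmint
  have hfm : f m < f z := hf m hm
  have hfH : ∀ y ∈ H, f y ≤ f z := by
    intro y hy
    by_contra hgt
    push_neg at hgt
    set t := (f y - f z) / (2 * (f y - f m)) with ht
    have h1 : 0 < f y - f m := by linarith
    have ht0 : 0 < t := div_pos (by linarith) (by linarith)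
    have ht1 : t < 1 := by
      rw [ht, div_lt_one (by linarith)]
      linarith
    have hcombo : (1 - t) • y + t • m ∈ interior H :=
      hconv.combo_self_interior_mem_interior hy hm (by linarith) ht0 (by ring)
    have hlt := hf _ hcombo
    rw [map_add, map_smul, map_smul, smul_eq_mul, smul_eq_mul] at hlt
    have htv : t * (f y - f m) = (f y - f z) / 2 := by
      rw [ht]; field_simp
    nlinarith
  have hfzm : f (z - m) ≠ 0 := by
    rw [map_sub]; intro h; linarith [sub_eq_zero.1 h]
  set u : ℝ × ℝ := (f (z - m))⁻¹ • (z - m) with hu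
  have hfu : f u = 1 := by
    rw [hu, map_smul, smul_eq_mul, inv_mul_cancel₀ hfzm]
  set ray : Set (ℝ × ℝ) := (fun t : ℝ => z + t • u) '' Ici (0:ℝ) with hray
  have hrayE : ∀ y ∈ ray, y ∉ E := by
    rintro y ⟨t, ht, rfl⟩
    rcases eq_or_lt_of_le (Set.mem_Ici.1 ht) with h0 | htpos
    · rw [← h0]
      simpa using hCE z hzC
    · intro hyE
      have hmem : z + t • u ∈ H := hES hyE
      have := hfH _ hmem
      rw [map_add, map_smul, smul_eq_mul, hfu, mul_one] at this
      linarith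
  have hraycont : Continuous fun t : ℝ => z + t • u := by fun_prop
  have hrayconn : IsPreconnected ray := isPreconnected_Ici.image _ hraycont.continuousOn
  have hzray : z ∈ ray := ⟨0, Set.mem_Ici.2 (le_refl _), by simp⟩
  set K := C ∪ ray with hK
  have hKconn : IsPreconnected K := hCc.union z hzC hzray hrayconn
  have hKE : K ⊆ Eᶜ := by
    rintro y (hy | hy)
    · exact hCE y hy
    · exact hrayE y hy
  have hsub : K ⊆ connectedComponentIn Eᶜ x :=
    hKconn.subset_connectedComponentIn (Or.inl hxC) hKE
  intro hbd
  have hrb := hbd.subset (Subset.trans subset_union_right hsub)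
  rw [isBounded_iff_forall_norm_le] at hrb
  obtain ⟨R, hR⟩ := hrb
  have hu0 : u ≠ 0 := by
    rintro h
    rw [h, map_zero] at hfu
    exact one_ne_zero hfu.symm
  have hun : 0 < ‖u‖ := norm_pos_iff.2 hu0
  have hzR : ‖z‖ ≤ R := hR z hzray
  set t := (R + ‖z‖ + 1) / ‖u‖ with htdef
  have ht0 : 0 ≤ t := div_nonneg (by linarith [norm_nonneg z]) hun.le
  have hyR := hR (z + t • u) ⟨t, ht0, rfl⟩
  have hnorm : ‖t • u‖ - ‖z‖ ≤ ‖z + t • u‖ := by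
    have h' := norm_add_le (z + t • u) (-z)
    have he : z + t • u + -z = t • u := by abel
    rw [he, norm_neg] at h'
    linarith
  rw [norm_smul, Real.norm_eq_abs, abs_of_nonneg ht0, htdef,
    div_mul_cancel₀ _ (ne_of_gt hun)] at hnorm
  linarith


end KOut

namespace KOut

lemma pick3 : ∀ a b : Fin 5, ∃ c1 c2 c3 : Fin 5,
    c1 ≠ c2 ∧ c1 ≠ c3 ∧ c2 ≠ c3 ∧ c1 ≠ a ∧ c1 ≠ b ∧ c2 ≠ a ∧ c2 ≠ b ∧ c3 ≠ a ∧ c3 ≠ b := by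
  decide

/-- the inside case is impossible once we have a non-adjacent extreme pair with
three common neighbours that are pairwise non-adjacent. -/
lemma inside_contra (rep : ObstacleRep (KStarGraph 5 5) 1) (i : Fin 1)
    (hall : rep.obs i ⊆ interior (convexHull ℝ (Set.range rep.v)))
    {p q w1 w2 w3 : Fin 5 ⊕ Fin 5}
    (hpq : p ≠ q) (hnadj : ¬ (KStarGraph 5 5).Adj p q)
    (hPe : rep.v p ∈ (convexHull ℝ (Set.range rep.v)).extremePoints ℝ)
    (hQe : rep.v q ∈ (convexHull ℝ (Set.range rep.v)).extremePoints ℝ)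
    (hpw1 : p ≠ w1) (hqw1 : q ≠ w1) (hpw2 : p ≠ w2) (hqw2 : q ≠ w2)
    (hpw3 : p ≠ w3) (hqw3 : q ≠ w3)
    (ha1 : (KStarGraph 5 5).Adj p w1) (hb1 : (KStarGraph 5 5).Adj w1 q)
    (ha2 : (KStarGraph 5 5).Adj p w2) (hb2 : (KStarGraph 5 5).Adj w2 q)
    (ha3 : (KStarGraph 5 5).Adj p w3) (hb3 : (KStarGraph 5 5).Adj w3 q)
    (hw12 : w1 ≠ w2) (hw13 : w1 ≠ w3) (hw23 : w2 ≠ w3)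
    (hn12 : ¬ (KStarGraph 5 5).Adj w1 w2) (hn13 : ¬ (KStarGraph 5 5).Adj w1 w3)
    (hn23 : ¬ (KStarGraph 5 5).Adj w2 w3) : False := by
  have hblock : ∀ a b : Fin 5 ⊕ Fin 5, a ≠ b → ¬ (KStarGraph 5 5).Adj a b →
      (rep.obs i ∩ openSegment ℝ (rep.v a) (rep.v b)).Nonempty := by
    intro a b h1 h2
    obtain ⟨j, hj⟩ := rep.blocks a b h1 h2
    rwa [Subsingleton.elim j i] at hj
  have hsegP : ∀ w : Fin 5 ⊕ Fin 5, (KStarGraph 5 5).Adj p w →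
      ∀ c ∈ rep.obs i, c ∉ segment ℝ (rep.v p) (rep.v w) :=
    fun w hadj c hc hmem => Set.disjoint_left.1 (rep.obs_avoid_edges i p w hadj) hc hmem
  have hsegQ : ∀ w : Fin 5 ⊕ Fin 5, (KStarGraph 5 5).Adj w q →
      ∀ c ∈ rep.obs i, c ∉ segment ℝ (rep.v w) (rep.v q) :=
    fun w hadj c hc hmem => Set.disjoint_left.1 (rep.obs_avoid_edges i w q hadj) hc hmem
  exact no_inside hPe hQe
    (cr_ne_zero (rep.genpos p q w1 hpq hpw1 hqw1))
    (cr_ne_zero (rep.genpos p q w2 hpq hpw2 hqw2))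
    (cr_ne_zero (rep.genpos p q w3 hpq hpw3 hqw3))
    hall (rep.obs_connected i).isPreconnected
    (hsegP w1 ha1) (hsegQ w1 hb1) (hsegP w2 ha2) (hsegQ w2 hb2) (hsegP w3 ha3) (hsegQ w3 hb3)
    (hblock p q hpq hnadj) (hblock w1 w2 hw12 hn12) (hblock w1 w3 hw13 hn13)
    (hblock w2 w3 hw23 hn23)

lemma inside_inl (rep : ObstacleRep (KStarGraph 5 5) 1) (i : Fin 1)
    (hall : rep.obs i ⊆ interior (convexHull ℝ (Set.range rep.v)))
    {a b : Fin 5} (hab : a ≠ b)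
    (hPe : rep.v (Sum.inl a) ∈ (convexHull ℝ (Set.range rep.v)).extremePoints ℝ)
    (hQe : rep.v (Sum.inl b) ∈ (convexHull ℝ (Set.range rep.v)).extremePoints ℝ) : False := by
  obtain ⟨c1, c2, c3, h12, h13, h23, h1a, h1b, h2a, h2b, h3a, h3b⟩ := pick3 a b
  refine inside_contra rep i hall (p := Sum.inl a) (q := Sum.inl b)
    (w1 := Sum.inr c1) (w2 := Sum.inr c2) (w3 := Sum.inr c3)
    (by simp [hab]) (fun h => h) hPe hQe
    (by simp) (by simp) (by simp) (by simp) (by simp) (by simp)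
    (show (a:ℕ) ≠ (c1:ℕ) from fun h => h1a.symm (Fin.val_injective h))
    (show (b:ℕ) ≠ (c1:ℕ) from fun h => h1b.symm (Fin.val_injective h))
    (show (a:ℕ) ≠ (c2:ℕ) from fun h => h2a.symm (Fin.val_injective h))
    (show (b:ℕ) ≠ (c2:ℕ) from fun h => h2b.symm (Fin.val_injective h))
    (show (a:ℕ) ≠ (c3:ℕ) from fun h => h3a.symm (Fin.val_injective h))
    (show (b:ℕ) ≠ (c3:ℕ) from fun h => h3b.symm (Fin.val_injective h))
    (by simp [h12]) (by simp [h13]) (by simp [h23])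
    (fun h => h) (fun h => h) (fun h => h)

lemma inside_inr (rep : ObstacleRep (KStarGraph 5 5) 1) (i : Fin 1)
    (hall : rep.obs i ⊆ interior (convexHull ℝ (Set.range rep.v)))
    {a b : Fin 5} (hab : a ≠ b)
    (hPe : rep.v (Sum.inr a) ∈ (convexHull ℝ (Set.range rep.v)).extremePoints ℝ)
    (hQe : rep.v (Sum.inr b) ∈ (convexHull ℝ (Set.range rep.v)).extremePoints ℝ) : False := by
  obtain ⟨c1, c2, c3, h12, h13, h23, h1a, h1b, h2a, h2b, h3a, h3b⟩ := pick3 a b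
  refine inside_contra rep i hall (p := Sum.inr a) (q := Sum.inr b)
    (w1 := Sum.inl c1) (w2 := Sum.inl c2) (w3 := Sum.inl c3)
    (by simp [hab]) (fun h => h) hPe hQe
    (by simp) (by simp) (by simp) (by simp) (by simp) (by simp)
    (show (c1:ℕ) ≠ (a:ℕ) from fun h => h1a (Fin.val_injective h))
    (show (c1:ℕ) ≠ (b:ℕ) from fun h => h1b (Fin.val_injective h))
    (show (c2:ℕ) ≠ (a:ℕ) from fun h => h2a (Fin.val_injective h))
    (show (c2:ℕ) ≠ (b:ℕ) from fun h => h2b (Fin.val_injective h))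
    (show (c3:ℕ) ≠ (a:ℕ) from fun h => h3a (Fin.val_injective h))
    (show (c3:ℕ) ≠ (b:ℕ) from fun h => h3b (Fin.val_injective h))
    (by simp [h12]) (by simp [h13]) (by simp [h23])
    (fun h => h) (fun h => h) (fun h => h)

end KOut

/-- every 1-obstacle representation of `K*_{5,5}` is an outside
obstacle representation: each point of the obstacle lies in the complement of the
union of the closed edge segments and its connected component there is unbounded. -/
theorem kstar55_obstacle_is_outside (rep : ObstacleRep (KStarGraph 5 5) 1) :
    ∀ i : Fin 1, ∀ x ∈ rep.obs i,
      x ∈ (⋃ (p : Fin 5 ⊕ Fin 5) (q : Fin 5 ⊕ Fin 5) (_ : (KStarGraph 5 5).Adj p q),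
            segment ℝ (rep.v p) (rep.v q))ᶜ ∧
      ¬ Bornology.IsBounded (connectedComponentIn
          (⋃ (p : Fin 5 ⊕ Fin 5) (q : Fin 5 ⊕ Fin 5) (_ : (KStarGraph 5 5).Adj p q),
            segment ℝ (rep.v p) (rep.v q))ᶜ x) := by
  intro i x hx
  classical
  set C := rep.obs i with hCdef
  set Eset := (⋃ (p : Fin 5 ⊕ Fin 5) (q : Fin 5 ⊕ Fin 5) (_ : (KStarGraph 5 5).Adj p q),
      segment ℝ (rep.v p) (rep.v q)) with hEdef
  have hCE : ∀ c ∈ C, c ∉ Eset := by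
    intro c hc hmem
    rw [hEdef, mem_iUnion] at hmem
    obtain ⟨p, hmem⟩ := hmem
    rw [mem_iUnion] at hmem
    obtain ⟨q, hmem⟩ := hmem
    rw [mem_iUnion] at hmem
    obtain ⟨hadj, hmem⟩ := hmem
    exact Set.disjoint_left.1 (rep.obs_avoid_edges i p q hadj) hc hmem
  refine ⟨hCE x hx, ?_⟩
  set S := Set.range rep.v with hSdef
  set H := convexHull ℝ S with hHdef
  have hconv : Convex ℝ H := convex_convexHull ℝ S
  have hcomp : IsCompact H := (Set.finite_range rep.v).isCompact_convexHull ℝ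
  have hES : Eset ⊆ H := by
    intro y hy
    rw [hEdef, mem_iUnion] at hy; obtain ⟨p, hy⟩ := hy
    rw [mem_iUnion] at hy; obtain ⟨q, hy⟩ := hy
    rw [mem_iUnion] at hy; obtain ⟨-, hy⟩ := hy
    have h1 : rep.v p ∈ H := subset_convexHull ℝ S ⟨p, rfl⟩
    have h2 : rep.v q ∈ H := subset_convexHull ℝ S ⟨q, rfl⟩
    exact hconv.segment_subset h1 h2 hy
  have hd0 : KOut.cr (rep.v (Sum.inl 0)) (rep.v (Sum.inl 1)) (rep.v (Sum.inl 2)) ≠ 0 := by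
    apply KOut.cr_ne_zero
    exact rep.genpos _ _ _ (by decide) (by decide) (by decide)
  have hmint : (interior H).Nonempty :=
    KOut.centroid_interior ⟨_, rfl⟩ ⟨_, rfl⟩ ⟨_, rfl⟩ hd0
  have hCc : IsPreconnected C := (rep.obs_connected i).isPreconnected
  by_cases hall : C ⊆ interior H
  · exfalso
    have hKM := closure_convexHull_extremePoints hcomp hconv
    have hExtS : H.extremePoints ℝ ⊆ S := by
      rw [hHdef]; exact extremePoints_convexHull_subset
    have htriple : ∃ p1 p2 p3 : Fin 5 ⊕ Fin 5, p1 ≠ p2 ∧ p1 ≠ p3 ∧ p2 ≠ p3 ∧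
        rep.v p1 ∈ H.extremePoints ℝ ∧ rep.v p2 ∈ H.extremePoints ℝ ∧
        rep.v p3 ∈ H.extremePoints ℝ := by
      by_contra hno
      push_neg at hno
      have hsub2 : ∃ a b : ℝ × ℝ, H.extremePoints ℝ ⊆ {a, b} := by
        rcases Set.eq_empty_or_nonempty (H.extremePoints ℝ) with hE | ⟨a, haE⟩
        · exact ⟨0, 0, by rw [hE]; exact empty_subset _⟩
        by_cases h2 : ∃ b ∈ H.extremePoints ℝ, b ≠ a
        · obtain ⟨b, hbE, hba⟩ := h2
          refine ⟨a, b, fun y hy => ?_⟩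
          by_contra hy2
          simp only [mem_insert_iff, mem_singleton_iff, not_or] at hy2
          obtain ⟨hya, hyb⟩ := hy2
          obtain ⟨p1, hp1⟩ := hExtS haE
          obtain ⟨p2, hp2⟩ := hExtS hbE
          obtain ⟨p3, hp3⟩ := hExtS hy
          have d12 : p1 ≠ p2 := fun h => hba (by rw [← hp1, ← hp2, h])
          have d13 : p1 ≠ p3 := fun h => hya (by rw [← hp1, ← hp3, h])
          have d23 : p2 ≠ p3 := fun h => hyb (by rw [← hp2, ← hp3, h])
          exact hno p1 p2 p3 d12 d13 d23 (by rw [hp1]; exact haE)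
            (by rw [hp2]; exact hbE) (by rw [hp3]; exact hy)
        · push_neg at h2
          refine ⟨a, a, fun y hy => ?_⟩
          have := h2 y hy
          simp [this]
      obtain ⟨a, b, hab⟩ := hsub2
      have hseg_closed : IsClosed (segment ℝ a b) := by
        rw [segment_eq_image ℝ a b]
        exact (isCompact_Icc.image (by fun_prop)).isClosed
      have hHsub : H ⊆ segment ℝ a b := by
        calc H = closure (convexHull ℝ (H.extremePoints ℝ)) := hKM.symm
          _ ⊆ closure (convexHull ℝ {a, b}) := closure_mono (convexHull_mono hab)
          _ = closure (segment ℝ a b) := by rw [convexHull_pair]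
          _ = segment ℝ a b := hseg_closed.closure_eq
      have hcol : Collinear ℝ (segment ℝ a b) := by
        rw [collinear_iff_of_mem (left_mem_segment ℝ a b)]
        refine ⟨b - a, ?_⟩
        rintro y ⟨s, t, hs, ht, hst, rfl⟩
        refine ⟨t, ?_⟩
        show s • a + t • b = t • (b - a) +ᵥ a
        rw [vadd_eq_add]
        apply Prod.ext_iff.2
        constructor
        · simp only [Prod.fst_add, Prod.snd_add, Prod.fst_sub, Prod.snd_sub, Prod.smul_fst,
            Prod.smul_snd, smul_eq_mul]
          linear_combination a.1 * hst
        · simp only [Prod.snd_add, Prod.fst_add, Prod.fst_sub, Prod.snd_sub, Prod.smul_fst,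
            Prod.smul_snd, smul_eq_mul]
          linear_combination a.2 * hst
      apply rep.genpos (Sum.inl 0) (Sum.inl 1) (Sum.inl 2) (by decide) (by decide) (by decide)
      apply hcol.subset
      intro y hy
      simp only [mem_insert_iff, mem_singleton_iff] at hy
      rcases hy with rfl | rfl | rfl <;>
        exact hHsub (subset_convexHull ℝ S ⟨_, rfl⟩)
    obtain ⟨p1, p2, p3, h12, h13, h23, he1, he2, he3⟩ := htriple
    rcases p1 with a1 | a1 <;> rcases p2 with a2 | a2 <;> rcases p3 with a3 | a3
    · exact KOut.inside_inl rep i hall (by simpa using h12) he1 he2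
    · exact KOut.inside_inl rep i hall (by simpa using h12) he1 he2
    · exact KOut.inside_inl rep i hall (by simpa using h13) he1 he3
    · exact KOut.inside_inr rep i hall (by simpa using h23) he2 he3
    · exact KOut.inside_inl rep i hall (by simpa using h23) he2 he3
    · exact KOut.inside_inr rep i hall (by simpa using h13) he1 he3
    · exact KOut.inside_inr rep i hall (by simpa using h12) he1 he2
    · exact KOut.inside_inr rep i hall (by simpa using h12) he1 he2
  · rw [Set.not_subset] at hall
    obtain ⟨z, hzC, hz⟩ := hall
    exact KOut.escape hES hmint hCc hCE hzC hz hx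
end
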